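/- Let M be a pointed metric space such that the pair (M, ℝ) has the Lip-BPB property, let ρ ∈ [0,1), and let Y be a real Banach space having ACK structure with parameter ρ. Then the pair (M, Y) has the Lip-BPB property for Lipschitz compact maps. -/

import Mathlib

open Set Metric NNReal MeasureTheory

/-- A Lipschitz map vanishing at the base point `z`, i.e. an element of `Lip₀(M,Y)`. -/
def IsLip0 {M Y : Type*} [MetricSpace M] [NormedAddCommGroup Y]
    (z : M) (F : M → Y) : Prop :=
  (∃ K : ℝ≥0, LipschitzWith K F) ∧ F z = 0

/-- The Lipschitz norm `‖F‖_L = sup {‖F p - F q‖ / d(p,q) : p ≠ q}`. -/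
noncomputable def lipNorm {M Y : Type*} [MetricSpace M] [NormedAddCommGroup Y]
    (F : M → Y) : ℝ :=
  sSup {r : ℝ | ∃ p q : M, p ≠ q ∧ r = ‖F p - F q‖ / dist p q}

/-- `F` strongly attains its norm. -/
def StronglyAttains {M Y : Type*} [MetricSpace M] [NormedAddCommGroup Y]
    (F : M → Y) : Prop :=
  ∃ p q : M, p ≠ q ∧ ‖F p - F q‖ = lipNorm F * dist p q

/-- `F` is Lipschitz compact: its Lipschitz image is relatively compact. -/
def IsLipCompact {M Y : Type*} [MetricSpace M] [NormedAddCommGroup Y] [NormedSpace ℝ Y]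
    (F : M → Y) : Prop :=
  IsCompact (closure {y : Y | ∃ p q : M, p ≠ q ∧ y = (dist p q)⁻¹ • (F p - F q)})

/-- The pair `(M,Y)` has the Lip-BPB property witnessed by the function `η`. -/
def LipBPBWith (M : Type*) [MetricSpace M] (z : M)
    (Y : Type*) [NormedAddCommGroup Y] (η : ℝ → ℝ) : Prop :=
  (∀ ε > 0, η ε > 0) ∧
  ∀ ε > 0, ∀ F : M → Y, IsLip0 z F → lipNorm F = 1 →
    ∀ p q : M, p ≠ q → ‖F p - F q‖ > (1 - η ε) * dist p q →
      ∃ G : M → Y, IsLip0 z G ∧ ∃ r s : M, r ≠ s ∧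
        ‖G r - G s‖ = dist r s ∧ lipNorm G = 1 ∧
        lipNorm (fun x => G x - F x) < ε ∧
        (dist p r + dist q s) / dist p q < ε

/-- The pair `(M,Y)` has the Lip-BPB property. -/
def LipBPB (M : Type*) [MetricSpace M] (z : M)
    (Y : Type*) [NormedAddCommGroup Y] : Prop :=
  ∃ η : ℝ → ℝ, LipBPBWith M z Y η

/-- The pair `(M,Y)` has the Lip-BPB property for Lipschitz compact maps
witnessed by the function `η`. -/
def LipBPBCompactWith (M : Type*) [MetricSpace M] (z : M)
    (Y : Type*) [NormedAddCommGroup Y] [NormedSpace ℝ Y] (η : ℝ → ℝ) : Prop :=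
  (∀ ε > 0, η ε > 0) ∧
  ∀ ε > 0, ∀ F : M → Y, IsLip0 z F → IsLipCompact F → lipNorm F = 1 →
    ∀ p q : M, p ≠ q → ‖F p - F q‖ > (1 - η ε) * dist p q →
      ∃ G : M → Y, IsLip0 z G ∧ IsLipCompact G ∧ ∃ r s : M, r ≠ s ∧
        ‖G r - G s‖ = dist r s ∧ lipNorm G = 1 ∧
        lipNorm (fun x => G x - F x) < ε ∧
        (dist p r + dist q s) / dist p q < ε

/-- The pair `(M,Y)` has the Lip-BPB property for Lipschitz compact maps. -/
def LipBPBCompact (M : Type*) [MetricSpace M] (z : M)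
    (Y : Type*) [NormedAddCommGroup Y] [NormedSpace ℝ Y] : Prop :=
  ∃ η : ℝ → ℝ, LipBPBCompactWith M z Y η

/-- `SA(M,Y)` is dense in `Lip₀(M,Y)`. -/
def SADense (M : Type*) [MetricSpace M] (z : M)
    (Y : Type*) [NormedAddCommGroup Y] : Prop :=
  ∀ F : M → Y, IsLip0 z F → ∀ ε > 0,
    ∃ G : M → Y, IsLip0 z G ∧ StronglyAttains G ∧ lipNorm (fun x => G x - F x) < ε

/-- `SA_K(M,Y)` is dense in `Lipc(M,Y)`. -/
def SAKDense (M : Type*) [MetricSpace M] (z : M)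
    (Y : Type*) [NormedAddCommGroup Y] [NormedSpace ℝ Y] : Prop :=
  ∀ F : M → Y, IsLip0 z F → IsLipCompact F → ∀ ε > 0,
    ∃ G : M → Y, IsLip0 z G ∧ IsLipCompact G ∧ StronglyAttains G ∧
      lipNorm (fun x => G x - F x) < ε

/-- A set of functionals on `Y` is weak-star open. -/
def IsWeakStarOpen {Y : Type*} [NormedAddCommGroup Y] [NormedSpace ℝ Y]
    (U : Set (Y →L[ℝ] ℝ)) : Prop :=
  IsOpen (X := WeakDual ℝ Y) (StrongDual.toWeakDual '' U)

/-- `Γ ⊆ B_{Y*}` is a 1-norming set. -/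
def IsOneNorming {Y : Type*} [NormedAddCommGroup Y] [NormedSpace ℝ Y]
    (Γ : Set (Y →L[ℝ] ℝ)) : Prop :=
  (∀ φ ∈ Γ, ‖φ‖ ≤ 1) ∧ ∀ y : Y, ‖y‖ = sSup {t : ℝ | ∃ φ ∈ Γ, t = |φ y|}

/-- `Y` has ACK structure with parameter `ρ`, witnessed by the 1-norming set `Γ`. -/
def ACKWith (Y : Type*) [NormedAddCommGroup Y] [NormedSpace ℝ Y]
    (ρ : ℝ) (Γ : Set (Y →L[ℝ] ℝ)) : Prop :=
  IsOneNorming Γ ∧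
  ∀ ε > (0 : ℝ), ∀ U : Set (Y →L[ℝ] ℝ), U.Nonempty → U ⊆ Γ →
    (∃ W : Set (Y →L[ℝ] ℝ), IsWeakStarOpen W ∧ U = W ∩ Γ) →
    ∃ V ⊆ U, V.Nonempty ∧ ∃ y₁ ∈ V, ∃ e : Y, ‖e‖ = 1 ∧ ∃ F : Y →L[ℝ] Y,
      ‖F e‖ = 1 ∧ ‖F‖ = 1 ∧
      y₁ (F e) = 1 ∧
      y₁.comp F = y₁ ∧
      (∀ φ ∈ Γ, φ ∉ {ψ ∈ Γ | ‖ψ.comp F‖ + (1 - ε) * ‖ψ - ψ.comp F‖ ≤ 1} →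
        |φ (F e)| ≤ ρ) ∧
      (∀ φ ∈ Γ, ∃ (n : ℕ) (v : Fin n → (Y →L[ℝ] ℝ)) (c : Fin n → ℝ),
        (∀ k, v k ∈ V) ∧ (∑ k, |c k|) ≤ 1 ∧
        ‖φ.comp F - ∑ k, c k • v k‖ < ε) ∧
      (∀ φ ∈ V, |φ e - 1| ≤ ε)

/-- `Y` has ACK structure with parameter `ρ`. -/
def HasACK (Y : Type*) [NormedAddCommGroup Y] [NormedSpace ℝ Y] (ρ : ℝ) : Prop :=
  ∃ Γ : Set (Y →L[ℝ] ℝ), ACKWith Y ρ Γ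

/-- `T : M → Y` is a `Γ`-flat map. -/
def IsGammaFlat {M Y : Type*} [MetricSpace M] [NormedAddCommGroup Y] [NormedSpace ℝ Y]
    (Γ : Set (Y →L[ℝ] ℝ)) (T : M → Y) : Prop :=
  ∀ U : Set (Y →L[ℝ] ℝ), IsWeakStarOpen U → (U ∩ Γ).Nonempty → ∀ δ > (0 : ℝ),
    ∃ V : Set (Y →L[ℝ] ℝ), IsWeakStarOpen V ∧ V ⊆ U ∧ (V ∩ Γ).Nonempty ∧
      ∀ φ ∈ V ∩ Γ, ∀ ψ ∈ V ∩ Γ, lipNorm (fun x => φ (T x) - ψ (T x)) < δ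

section LipTools

variable {M : Type*} {Y : Type*} [MetricSpace M] [NormedAddCommGroup Y] [NormedSpace ℝ Y]

/-- pointwise Lipschitz bound -/
def PtLip (F : M → Y) (C : ℝ) : Prop := ∀ x y : M, ‖F x - F y‖ ≤ C * dist x y

def lipSet (F : M → Y) : Set ℝ := {r : ℝ | ∃ p q : M, p ≠ q ∧ r = ‖F p - F q‖ / dist p q}

lemma lipNorm_def (F : M → Y) : lipNorm F = sSup (lipSet F) := rfl

lemma PtLip.bddAbove {F : M → Y} {C : ℝ} (h : PtLip F C) : BddAbove (lipSet F) := by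
  refine ⟨max C 0, ?_⟩
  rintro r ⟨p, q, hpq, rfl⟩
  have hd : 0 < dist p q := dist_pos.2 hpq
  rw [div_le_iff₀ hd]
  calc ‖F p - F q‖ ≤ C * dist p q := h p q
    _ ≤ max C 0 * dist p q := by
        have : C ≤ max C 0 := le_max_left _ _
        nlinarith

lemma lipNorm_nonneg (F : M → Y) : 0 ≤ lipNorm F := by
  refine Real.sSup_nonneg ?_
  rintro r ⟨p, q, hpq, rfl⟩
  positivity

lemma norm_sub_le_lipNorm {F : M → Y} {C : ℝ} (h : PtLip F C) (x y : M) :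
    ‖F x - F y‖ ≤ lipNorm F * dist x y := by
  rcases eq_or_ne x y with rfl | hxy
  · simp
  · have hd : 0 < dist x y := dist_pos.2 hxy
    have hmem : ‖F x - F y‖ / dist x y ∈ lipSet F := ⟨x, y, hxy, rfl⟩
    have := le_csSup h.bddAbove hmem
    rw [div_le_iff₀ hd] at this
    exact this

lemma lipNorm_le {F : M → Y} {C : ℝ} (hC : 0 ≤ C) (h : PtLip F C) : lipNorm F ≤ C := by
  refine Real.sSup_le ?_ hC
  rintro r ⟨p, q, hpq, rfl⟩
  have hd : 0 < dist p q := dist_pos.2 hpq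
  rw [div_le_iff₀ hd]
  exact h p q

lemma div_le_lipNorm {F : M → Y} {C : ℝ} (h : PtLip F C) {x y : M} (hxy : x ≠ y) :
    ‖F x - F y‖ / dist x y ≤ lipNorm F :=
  le_csSup h.bddAbove ⟨x, y, hxy, rfl⟩

lemma ptLip_of_lipschitz {F : M → Y} {K : ℝ≥0} (h : LipschitzWith K F) : PtLip F (K : ℝ) := by
  intro x y
  have := h.dist_le_mul x y
  rwa [dist_eq_norm] at this

lemma lipschitz_of_ptLip {F : M → Y} {C : ℝ} (h : PtLip F C) :
    LipschitzWith C.toNNReal F := by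
  refine LipschitzWith.of_dist_le_mul fun x y => ?_
  rw [dist_eq_norm]
  calc ‖F x - F y‖ ≤ C * dist x y := h x y
    _ ≤ (C.toNNReal : ℝ) * dist x y := by
        have : C ≤ (C.toNNReal : ℝ) := Real.le_coe_toNNReal C
        nlinarith [dist_nonneg (x := x) (y := y)]

lemma exists_ptLip_of_isLip0 {F : M → Y} (h : ∃ K : ℝ≥0, LipschitzWith K F) :
    ∃ C : ℝ, 0 ≤ C ∧ PtLip F C := by
  obtain ⟨K, hK⟩ := h
  exact ⟨K, K.2, ptLip_of_lipschitz hK⟩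

lemma ptLip_lipNorm {F : M → Y} (h : ∃ C, 0 ≤ C ∧ PtLip F C) : PtLip F (lipNorm F) :=
  fun x y => norm_sub_le_lipNorm h.choose_spec.2 x y

lemma lipNorm_inv_smul {F : M → Y} (h : ∃ C, 0 ≤ C ∧ PtLip F C) (hL : 0 < lipNorm F) :
    lipNorm (fun x => (lipNorm F)⁻¹ • F x) = 1 := by
  set L := lipNorm F with hLdef
  have hpt : PtLip F L := ptLip_lipNorm h
  have h1 : PtLip (fun x => L⁻¹ • F x) 1 := by
    intro x y
    have : (L⁻¹ • F x) - (L⁻¹ • F y) = L⁻¹ • (F x - F y) := by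
      rw [smul_sub]
    rw [this, norm_smul]
    have : ‖L⁻¹‖ = L⁻¹ := by
      rw [Real.norm_eq_abs, abs_of_pos (inv_pos.2 hL)]
    rw [this]
    have h2 := hpt x y
    calc L⁻¹ * ‖F x - F y‖ ≤ L⁻¹ * (L * dist x y) := by
          apply mul_le_mul_of_nonneg_left h2 (inv_pos.2 hL).le
      _ = dist x y := by field_simp
      _ = 1 * dist x y := by ring
  have hle : lipNorm (fun x => L⁻¹ • F x) ≤ 1 := lipNorm_le zero_le_one h1
  have hge : 1 ≤ lipNorm (fun x => L⁻¹ • F x) := by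
    set Lh := lipNorm (fun x => L⁻¹ • F x) with hLh
    have h2 : PtLip F (L * Lh) := by
      intro x y
      have h3 := norm_sub_le_lipNorm h1 x y
      have h4 : (L⁻¹ • F x) - (L⁻¹ • F y) = L⁻¹ • (F x - F y) := by rw [smul_sub]
      rw [h4, norm_smul, Real.norm_eq_abs, abs_of_pos (inv_pos.2 hL)] at h3
      have h5 : ‖F x - F y‖ = L * (L⁻¹ * ‖F x - F y‖) := by field_simp
      rw [h5]
      calc L * (L⁻¹ * ‖F x - F y‖) ≤ L * (Lh * dist x y) := by
            apply mul_le_mul_of_nonneg_left h3 hL.le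
        _ = L * Lh * dist x y := by ring
    have h6 : lipNorm F ≤ L * Lh := lipNorm_le (mul_nonneg hL.le (lipNorm_nonneg _)) h2
    rw [← hLdef] at h6
    nlinarith
  linarith

end LipTools
section NormingWS

variable {Y : Type*} [NormedAddCommGroup Y] [NormedSpace ℝ Y]

lemma norming_bound {Γ : Set (Y →L[ℝ] ℝ)} (hΓ : IsOneNorming Γ) {C : ℝ} {y : Y}
    (hC : 0 ≤ C) (h : ∀ φ ∈ Γ, |φ y| ≤ C) : ‖y‖ ≤ C := by
  rw [hΓ.2 y]
  refine Real.sSup_le ?_ hC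
  rintro t ⟨φ, hφ, rfl⟩
  exact h φ hφ

lemma norming_exists {Γ : Set (Y →L[ℝ] ℝ)} (hΓ : IsOneNorming Γ) {c : ℝ} {y : Y}
    (hc : 0 ≤ c) (h : c < ‖y‖) : ∃ φ ∈ Γ, c < |φ y| := by
  rw [hΓ.2 y] at h
  rcases Set.eq_empty_or_nonempty {t : ℝ | ∃ φ ∈ Γ, t = |φ y|} with he | hne
  · rw [he, Real.sSup_empty] at h; linarith
  · obtain ⟨t, ⟨φ, hφ, rfl⟩, hct⟩ := exists_lt_of_lt_csSup hne h
    exact ⟨φ, hφ, hct⟩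

lemma image_toWeakDual (U : Set (Y →L[ℝ] ℝ)) :
    (StrongDual.toWeakDual '' U) =
      {ψ : WeakDual ℝ Y | StrongDual.toWeakDual.symm ψ ∈ U} := by
  ext ψ
  constructor
  · rintro ⟨φ, hφ, rfl⟩
    simpa using hφ
  · intro hψ
    exact ⟨StrongDual.toWeakDual.symm ψ, hψ, by simp⟩

lemma isWeakStarOpen_of {U : Set (Y →L[ℝ] ℝ)}
    (h : IsOpen {ψ : WeakDual ℝ Y | StrongDual.toWeakDual.symm ψ ∈ U}) :
    IsWeakStarOpen U := by
  unfold IsWeakStarOpen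
  rw [image_toWeakDual]
  exact h

lemma isWeakStarOpen_abs_gt (v : Y) (c : ℝ) :
    IsWeakStarOpen {φ : Y →L[ℝ] ℝ | c < |φ v|} := by
  apply isWeakStarOpen_of
  have : {ψ : WeakDual ℝ Y | StrongDual.toWeakDual.symm ψ ∈ {φ : Y →L[ℝ] ℝ | c < |φ v|}}
      = {ψ : WeakDual ℝ Y | c < |ψ v|} := rfl
  rw [this]
  have hcont : Continuous fun ψ : WeakDual ℝ Y => |ψ v| :=
    (WeakDual.eval_continuous v).abs
  exact isOpen_lt continuous_const hcont

end NormingWS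

section FlatShrink

variable {M : Type*} {Y : Type*} [MetricSpace M] [NormedAddCommGroup Y] [NormedSpace ℝ Y]

lemma flat_shrink {Γ : Set (Y →L[ℝ] ℝ)} (hΓ1 : ∀ φ ∈ Γ, ‖φ‖ ≤ 1)
    (F : M → Y) (hFc : IsLipCompact F)
    {W₀ : Set (Y →L[ℝ] ℝ)} (hW₀ : IsWeakStarOpen W₀)
    {φ₀ : Y →L[ℝ] ℝ} (hφ₀ : φ₀ ∈ W₀ ∩ Γ) {δ : ℝ} (hδ : 0 < δ) :
    ∃ W' : Set (Y →L[ℝ] ℝ), IsWeakStarOpen W' ∧ W' ⊆ W₀ ∧ φ₀ ∈ W' ∧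
      ∀ φ ∈ W' ∩ Γ, ∀ ψ ∈ W' ∩ Γ, ∀ x y : M,
        |φ (F x - F y) - ψ (F x - F y)| ≤ δ * dist x y := by
  classical
  set K := closure {y : Y | ∃ p q : M, p ≠ q ∧ y = (dist p q)⁻¹ • (F p - F q)} with hK
  have hKc : IsCompact K := hFc
  have hcover : K ⊆ ⋃ u : K, Metric.ball (u : Y) (δ/8) := by
    intro u hu
    exact Set.mem_iUnion.2 ⟨⟨u, hu⟩, Metric.mem_ball_self (by linarith)⟩
  obtain ⟨tset, htset⟩ := hKc.elim_finite_subcover (fun u : K => Metric.ball (u : Y) (δ/8))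
    (fun _ => Metric.isOpen_ball) hcover
  set W' := W₀ ∩ {φ : Y →L[ℝ] ℝ | ∀ u ∈ tset, |φ (u : Y) - φ₀ (u : Y)| < δ/4} with hW'
  have hopen : IsWeakStarOpen W' := by
    unfold IsWeakStarOpen
    rw [Set.image_inter StrongDual.toWeakDual.injective]
    apply IsOpen.inter hW₀
    rw [image_toWeakDual]
    have : {ψ : WeakDual ℝ Y |
        StrongDual.toWeakDual.symm ψ ∈
          {φ : Y →L[ℝ] ℝ | ∀ u ∈ tset, |φ (u : Y) - φ₀ (u : Y)| < δ/4}}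
        = ⋂ u ∈ tset, {ψ : WeakDual ℝ Y | |ψ (u : Y) - φ₀ (u : Y)| < δ/4} := by
      ext ψ
      simp only [Set.mem_setOf_eq, Set.mem_iInter]
      rfl
    rw [this]
    apply isOpen_biInter_finset
    intro u _
    have hcont : Continuous fun ψ : WeakDual ℝ Y => |ψ (u : Y) - φ₀ (u : Y)| :=
      ((WeakDual.eval_continuous (u : Y)).sub continuous_const).abs
    exact isOpen_lt hcont continuous_const
  refine ⟨W', hopen, Set.inter_subset_left, ⟨hφ₀.1, ?_⟩, ?_⟩
  · intro u _
    simp only [sub_self, abs_zero]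
    positivity
  · rintro φ ⟨hφW', hφΓ⟩ ψ ⟨hψW', hψΓ⟩ x y
    rcases eq_or_ne x y with rfl | hxy
    · simp
    · have hd : 0 < dist x y := dist_pos.2 hxy
      set u := (dist x y)⁻¹ • (F x - F y) with hu
      have huK : u ∈ K := subset_closure ⟨x, y, hxy, rfl⟩
      have := htset huK
      rw [Set.mem_iUnion₂] at this
      obtain ⟨i, hi, hui⟩ := this
      have hdi : ‖u - (i : Y)‖ < δ/8 := by
        rw [Metric.mem_ball, dist_eq_norm] at hui; exact hui
      have hφ1 : ‖φ‖ ≤ 1 := hΓ1 φ hφΓ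
      have hψ1 : ‖ψ‖ ≤ 1 := hΓ1 ψ hψΓ
      have hφi := hφW'.2 i hi
      have hψi := hψW'.2 i hi
      have hbound : |φ u - ψ u| ≤ 3*δ/4 := by
        have e1 : |φ (u - (i : Y))| ≤ δ/8 := by
          calc |φ (u - (i:Y))| ≤ ‖φ‖ * ‖u - (i:Y)‖ := φ.le_opNorm _
            _ ≤ 1 * (δ/8) := by
                apply mul_le_mul hφ1 hdi.le (norm_nonneg _) zero_le_one
            _ = δ/8 := by ring
        have e2 : |ψ (u - (i : Y))| ≤ δ/8 := by
          calc |ψ (u - (i:Y))| ≤ ‖ψ‖ * ‖u - (i:Y)‖ := ψ.le_opNorm _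
            _ ≤ 1 * (δ/8) := by
                apply mul_le_mul hψ1 hdi.le (norm_nonneg _) zero_le_one
            _ = δ/8 := by ring
        have e3 : φ u - ψ u = φ (u - (i:Y)) + (φ (i:Y) - φ₀ (i:Y)) +
            (φ₀ (i:Y) - ψ (i:Y)) - ψ (u - (i:Y)) := by
          simp only [map_sub]
          ring
        rw [e3]
        set A := φ (u - (i:Y))
        set B := φ (i:Y) - φ₀ (i:Y)
        set C := φ₀ (i:Y) - ψ (i:Y)
        set Dd := ψ (u - (i:Y))
        have t1 : |A + B + C - Dd| ≤ |A| + |B| + |C| + |Dd| := by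
          have h1 := abs_add_le (A + B + C) (-Dd)
          have h2 := abs_add_le (A + B) C
          have h3 := abs_add_le A B
          rw [abs_neg] at h1
          have : A + B + C - Dd = A + B + C + -Dd := by ring
          rw [this]
          linarith
        have h4 : |C| ≤ δ/4 := by
          rw [show C = -(ψ (i:Y) - φ₀ (i:Y)) by ring, abs_neg]
          exact hψi.le
        have h5 : |B| ≤ δ/4 := hφi.le
        linarith
      have hfin : φ (F x - F y) - ψ (F x - F y) = dist x y * (φ u - ψ u) := by
        have : F x - F y = dist x y • u := by
          rw [hu, smul_smul]
          field_simp
          rw [one_smul]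
        rw [this]
        simp only [ContinuousLinearMap.map_smul, smul_eq_mul]
        ring
      rw [hfin, abs_mul, abs_of_pos hd]
      calc dist x y * |φ u - ψ u| ≤ dist x y * (3*δ/4) := by
            apply mul_le_mul_of_nonneg_left hbound hd.le
        _ ≤ δ * dist x y := by nlinarith
end FlatShrink
section StepLemma

lemma PtLip.of_le {M : Type*} {Y : Type*} [MetricSpace M] [NormedAddCommGroup Y]
    {F : M → Y} {C C' : ℝ} (h : PtLip F C) (hle : C ≤ C') : PtLip F C' :=
  fun x y => le_trans (h x y) (mul_le_mul_of_nonneg_right hle dist_nonneg)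

set_option maxHeartbeats 1000000 in
lemma step_lemma {M Y : Type*} [MetricSpace M] [NormedAddCommGroup Y] [NormedSpace ℝ Y]
    (z : M) {Γ : Set (Y →L[ℝ] ℝ)} {ρ : ℝ} (hρ0 : 0 ≤ ρ) (hρ1 : ρ < 1) (hACK : ACKWith Y ρ Γ)
    {η₀ : ℝ → ℝ} (hη : LipBPBWith M z ℝ η₀)
    (F : M → Y) (p q : M) (hF0 : IsLip0 z F) (hFc : IsLipCompact F)
    (hF1 : lipNorm F = 1) (hpq : p ≠ q)
    (ε₁ D W : ℝ) (hε₁0 : 0 < ε₁) (hε₁1 : ε₁ ≤ 1/8) (hD0 : 0 < D) (hDε : D ≤ ε₁)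
    (hDη : D ≤ η₀ ε₁) (hW0 : 0 < W) (hW1 : W ≤ 1)
    (hρcap : ρ * (ε₁ + D) / (1 - ρ) ≤ 1)
    (hdef : ‖F p - F q‖ > (1 - D) * dist p q) :
    ∃ (G : M → Y) (r s : M), IsLip0 z G ∧ IsLipCompact G ∧ lipNorm G = 1 ∧ r ≠ s ∧
      ‖G r - G s‖ > (1 - W) * dist r s ∧
      (∀ x y : M, ‖(G x - F x) - (G y - F y)‖ ≤ (3 * (ε₁ + D) / (1 - ρ) + W) * dist x y) ∧
      dist p r + dist q s ≤ ε₁ * dist p q := by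
  classical
  have h1ρ : 0 < 1 - ρ := by linarith
  obtain ⟨d, hddef⟩ : ∃ d : ℝ, d = dist p q := ⟨_, rfl⟩
  rw [← hddef] at hdef
  have hd0 : 0 < d := by rw [hddef]; exact dist_pos.2 hpq
  obtain ⟨bb, hbbdef⟩ : ∃ bb : ℝ, bb = ε₁ + D := ⟨_, rfl⟩
  have hbb0 : 0 < bb := by rw [hbbdef]; positivity
  have hbb1 : bb ≤ 1/2 := by rw [hbbdef]; linarith
  obtain ⟨t, htdef⟩ : ∃ t : ℝ, t = ρ * bb / (1 - ρ) := ⟨_, rfl⟩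
  have ht0 : 0 ≤ t := by rw [htdef]; positivity
  have ht1 : t ≤ 1 := by rw [htdef, hbbdef]; exact hρcap
  have ht_eq : t * (1 - ρ) = ρ * bb := by rw [htdef]; field_simp
  obtain ⟨W₂, hW₂def⟩ : ∃ x : ℝ, x = W / 2 := ⟨_, rfl⟩
  obtain ⟨ε₂, hε₂def⟩ : ∃ x : ℝ, x = W / 80 := ⟨_, rfl⟩
  obtain ⟨δ', hδ'def⟩ : ∃ x : ℝ, x = W / 8 := ⟨_, rfl⟩
  have hε₂0 : 0 < ε₂ := by rw [hε₂def]; positivity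
  have hδ'0 : 0 < δ' := by rw [hδ'def]; positivity
  have hW₂0 : 0 < W₂ := by rw [hW₂def]; positivity
  -- F is 1-Lipschitz pointwise
  have hFcert : ∃ C, 0 ≤ C ∧ PtLip F C := exists_ptLip_of_isLip0 hF0.1
  have hFpt : PtLip F 1 := by
    have := ptLip_lipNorm hFcert
    rwa [hF1] at this
  -- norming functional
  have hΓ1 := hACK.1.1
  have h0le : (0:ℝ) ≤ (1 - D) * d :=
    mul_nonneg (by linarith only [hDε, hε₁1] : (0:ℝ) ≤ 1 - D) hd0.le
  obtain ⟨φ₀, hφ₀Γ, hφ₀⟩ := norming_exists hACK.1 h0le hdef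
  -- weak-star open set
  have hW₀open : IsWeakStarOpen {φ : Y →L[ℝ] ℝ | (1 - D) * d < |φ (F p - F q)|} :=
    isWeakStarOpen_abs_gt _ _
  -- flatness shrink
  obtain ⟨W', hW'open, hW'sub, hφ₀W', hflat⟩ :=
    flat_shrink hΓ1 F hFc hW₀open (Set.mem_inter hφ₀ hφ₀Γ) hδ'0
  -- ACK structure
  obtain ⟨V, hVsub, hVne, y₁, hy₁V, e, he, T, hTe1, hT1, hy₁Te, hy₁T, h4, h5, h6⟩ :=
    hACK.2 ε₂ hε₂0 (W' ∩ Γ) ⟨φ₀, hφ₀W', hφ₀Γ⟩ Set.inter_subset_right ⟨W', hW'open, rfl⟩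
  have hy₁W' : y₁ ∈ W' := (hVsub hy₁V).1
  have hy₁Γ : y₁ ∈ Γ := (hVsub hy₁V).2
  have hy₁n : ‖y₁‖ ≤ 1 := hΓ1 y₁ hy₁Γ
  obtain ⟨Se, hSedef⟩ : ∃ w : Y, w = T e := ⟨_, rfl⟩
  have hSen : ‖Se‖ = 1 := by rw [hSedef]; exact hTe1
  have hy₁Se : y₁ Se = 1 := by rw [hSedef]; exact hy₁Te
  -- scalar function f
  obtain ⟨f, hfdef⟩ : ∃ f : M → ℝ, ∀ x, f x = y₁ (F x) := ⟨_, fun _ => rfl⟩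
  have hfsub : ∀ x y : M, f x - f y = y₁ (F x - F y) := by
    intro x y; rw [hfdef, hfdef, map_sub]
  have hfpt : PtLip f 1 := by
    intro x y
    rw [hfsub x y, Real.norm_eq_abs]
    calc |y₁ (F x - F y)| ≤ ‖y₁‖ * ‖F x - F y‖ := y₁.le_opNorm _
      _ ≤ 1 * (1 * dist x y) := by
          apply mul_le_mul hy₁n (hFpt x y) (norm_nonneg _) zero_le_one
      _ = 1 * dist x y := by ring
  have hfz : f z = 0 := by rw [hfdef, hF0.2, map_zero]
  obtain ⟨L, hLdef⟩ : ∃ L : ℝ, L = lipNorm f := ⟨_, rfl⟩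
  have hfcert : ∃ C, 0 ≤ C ∧ PtLip f C := ⟨1, zero_le_one, hfpt⟩
  have hL1 : L ≤ 1 := by rw [hLdef]; exact lipNorm_le zero_le_one hfpt
  have hfpq : (1 - D) * d < |f p - f q| := by
    have hmem : y₁ ∈ {φ : Y →L[ℝ] ℝ | (1 - D) * d < |φ (F p - F q)|} := hW'sub hy₁W'
    have h2 : (1 - D) * d < |y₁ (F p - F q)| := hmem
    rwa [← hfsub p q] at h2
  have hLlb : 1 - D < L := by
    have h1 : |f p - f q| / d ≤ L := by
      rw [hLdef, hddef]
      have := div_le_lipNorm hfpt hpq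
      rwa [Real.norm_eq_abs] at this
    rw [div_le_iff₀ hd0] at h1
    nlinarith only [h1, hfpq, hd0]
  have hL0 : 0 < L := by
    have : D ≤ 1/8 := le_trans hDε hε₁1
    linarith
  have hLinv : 1 ≤ L⁻¹ := by
    rw [le_inv_comm₀ zero_lt_one hL0]; simpa using hL1
  -- normalized scalar function
  obtain ⟨fh, hfhdef⟩ : ∃ fh : M → ℝ, ∀ x, fh x = L⁻¹ * f x := ⟨_, fun _ => rfl⟩
  have hfheq : fh = fun x => (lipNorm f)⁻¹ • f x := by
    funext x; rw [hfhdef, smul_eq_mul, hLdef]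
  have hfh1 : lipNorm fh = 1 := by
    rw [hfheq]
    exact lipNorm_inv_smul hfcert (by rw [← hLdef]; exact hL0)
  have hfhsub : ∀ x y : M, fh x - fh y = L⁻¹ * (f x - f y) := by
    intro x y; rw [hfhdef, hfhdef]; ring
  have hfhpt : PtLip fh L⁻¹ := by
    intro x y
    rw [hfhsub x y, Real.norm_eq_abs, abs_mul, abs_of_pos (inv_pos.2 hL0)]
    have h2 := hfpt x y
    rw [Real.norm_eq_abs] at h2
    calc L⁻¹ * |f x - f y| ≤ L⁻¹ * (1 * dist x y) := by
          apply mul_le_mul_of_nonneg_left h2 (inv_pos.2 hL0).le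
      _ = L⁻¹ * dist x y := by ring
  have hfh0 : IsLip0 z fh := by
    constructor
    · exact ⟨(L⁻¹).toNNReal, lipschitz_of_ptLip hfhpt⟩
    · rw [hfhdef, hfz]; ring
  have hfhpq : ‖fh p - fh q‖ > (1 - η₀ ε₁) * dist p q := by
    rw [Real.norm_eq_abs, hfhsub p q, abs_mul, abs_of_pos (inv_pos.2 hL0), ← hddef]
    have h3 : |f p - f q| ≤ L⁻¹ * |f p - f q| := by
      nlinarith only [hLinv, abs_nonneg (f p - f q)]
    have h4 : (1 - η₀ ε₁) * d ≤ (1 - D) * d := by nlinarith only [hDη, hd0]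
    linarith [hfpq]
  -- scalar Lip-BPB
  obtain ⟨g, hg0, r, s, hrs, hgatt, hg1, hgdiff, hgdrift⟩ :=
    hη.2 ε₁ hε₁0 fh hfh0 hfh1 p q hpq hfhpq
  have hdrs : 0 < dist r s := dist_pos.2 hrs
  have hgcert : ∃ C, 0 ≤ C ∧ PtLip g C := exists_ptLip_of_isLip0 hg0.1
  have hgpt : PtLip g 1 := by
    have := ptLip_lipNorm hgcert
    rwa [hg1] at this
  -- pointwise bound on g - f
  have hgfh : PtLip (fun x => g x - fh x) ε₁ := by
    have hcert : ∃ C, 0 ≤ C ∧ PtLip (fun x => g x - fh x) C := by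
      refine ⟨1 + L⁻¹, by positivity, ?_⟩
      intro x y
      have h1 := hgpt x y
      have h2 := hfhpt x y
      have h3 : (g x - fh x) - (g y - fh y) = (g x - g y) - (fh x - fh y) := by ring
      rw [h3]
      calc ‖(g x - g y) - (fh x - fh y)‖ ≤ ‖g x - g y‖ + ‖fh x - fh y‖ := norm_sub_le _ _
        _ ≤ 1 * dist x y + L⁻¹ * dist x y := by linarith
        _ = (1 + L⁻¹) * dist x y := by ring
    exact (ptLip_lipNorm hcert).of_le hgdiff.le
  have hfhf : PtLip (fun x => fh x - f x) D := by
    intro x y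
    have h1 : (fh x - f x) - (fh y - f y) = (L⁻¹ - 1) * (f x - f y) := by
      rw [hfhdef, hfhdef]; ring
    have h3 : |f x - f y| ≤ L * dist x y := by
      have := norm_sub_le_lipNorm hfpt x y
      rwa [Real.norm_eq_abs, ← hLdef] at this
    rw [h1, Real.norm_eq_abs, abs_mul, abs_of_nonneg (by linarith : (0:ℝ) ≤ L⁻¹ - 1)]
    have h4 : (L⁻¹ - 1) * |f x - f y| ≤ (L⁻¹ - 1) * (L * dist x y) := by
      apply mul_le_mul_of_nonneg_left h3 (by linarith)
    have h5 : (L⁻¹ - 1) * L = 1 - L := by field_simp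
    have h6 : 1 - L ≤ D := by linarith
    nlinarith only [h4, h5, h6, dist_nonneg (x := x) (y := y)]
  have hgf : PtLip (fun x => g x - f x) bb := by
    intro x y
    have h1 : (g x - f x) - (g y - f y) =
        ((g x - fh x) - (g y - fh y)) + ((fh x - f x) - (fh y - f y)) := by ring
    rw [h1, hbbdef]
    calc ‖_ + _‖ ≤ ‖(g x - fh x) - (g y - fh y)‖ + ‖(fh x - f x) - (fh y - f y)‖ :=
          norm_add_le _ _
      _ ≤ ε₁ * dist x y + D * dist x y := add_le_add (hgfh x y) (hfhf x y)
      _ = (ε₁ + D) * dist x y := by ring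
  -- the perturbation coefficient
  obtain ⟨a, hadef⟩ : ∃ a : M → ℝ, ∀ x, a x = (1 + t) * g x - f x := ⟨_, fun _ => rfl⟩
  have hapt : ∀ x y : M, |a x - a y| ≤ (bb + t) * dist x y := by
    intro x y
    have h1 : a x - a y = ((g x - f x) - (g y - f y)) + t * (g x - g y) := by
      rw [hadef, hadef]; ring
    have h2 := hgf x y
    have h3 := hgpt x y
    rw [Real.norm_eq_abs] at h2 h3
    rw [h1]
    calc |((g x - f x) - (g y - f y)) + t * (g x - g y)|
        ≤ |(g x - f x) - (g y - f y)| + |t * (g x - g y)| := abs_add_le _ _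
      _ ≤ bb * dist x y + t * (1 * dist x y) := by
          refine add_le_add h2 ?_
          rw [abs_mul, abs_of_nonneg ht0]
          apply mul_le_mul_of_nonneg_left h3 ht0
      _ = (bb + t) * dist x y := by ring
  obtain ⟨G₀, hG₀def⟩ : ∃ G₀ : M → Y, ∀ x, G₀ x = F x + a x • Se := ⟨_, fun _ => rfl⟩
  have hG₀sub : ∀ x y : M, G₀ x - G₀ y = (F x - F y) + (a x - a y) • Se := by
    intro x y
    rw [hG₀def, hG₀def, sub_smul]
    abel
  -- the key uniform bound
  have key : ∀ x y : M, ‖G₀ x - G₀ y‖ ≤ ((1 + t) * (1 + W₂)) * dist x y := by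
    intro x y
    rcases eq_or_ne x y with rfl | hxy
    · simp
    · have hdxy : 0 < dist x y := dist_pos.2 hxy
      have hdpos : 0 ≤ dist x y := hdxy.le
      obtain ⟨u, hudef⟩ : ∃ u : Y, u = F x - F y := ⟨_, rfl⟩
      have hu : ‖u‖ ≤ dist x y := by rw [hudef]; simpa using hFpt x y
      obtain ⟨aa, haadef⟩ : ∃ aa : ℝ, aa = a x - a y := ⟨_, rfl⟩
      have haa : |aa| ≤ (bb + t) * dist x y := by rw [haadef]; exact hapt x y
      refine norming_bound hACK.1 (by positivity) ?_
      intro φ hφΓ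
      have hφ1 : ‖φ‖ ≤ 1 := hΓ1 φ hφΓ
      have hval : φ (G₀ x - G₀ y) = φ u + aa * φ Se := by
        rw [hG₀sub x y, ← hudef, ← haadef, map_add, ContinuousLinearMap.map_smul,
          smul_eq_mul]
      by_cases hV₁ : ‖φ.comp T‖ + (1 - ε₂) * ‖φ - φ.comp T‖ ≤ 1
      · -- good case
        obtain ⟨n, v, c, hvV, hcsum, happ⟩ := h5 φ hφΓ
        obtain ⟨cs, hcsdef⟩ : ∃ cs : ℝ, cs = ∑ k, c k := ⟨_, rfl⟩
        have hφT : ‖φ.comp T‖ ≤ 1 := by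
          calc ‖φ.comp T‖ ≤ ‖φ‖ * ‖T‖ := ContinuousLinearMap.opNorm_comp_le _ _
            _ ≤ 1 * 1 := by rw [hT1]; exact mul_le_mul_of_nonneg_right hφ1 zero_le_one
            _ = 1 := by ring
        have hsub2 : ‖φ - φ.comp T‖ ≤ 2 := by
          calc ‖φ - φ.comp T‖ ≤ ‖φ‖ + ‖φ.comp T‖ := norm_sub_le _ _
            _ ≤ 2 := by linarith
        obtain ⟨A1, hA1def⟩ : ∃ A1 : ℝ, A1 = (φ - φ.comp T) u := ⟨_, rfl⟩
        have hA1 : |A1| ≤ ‖φ - φ.comp T‖ * dist x y := by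
          rw [hA1def]
          calc |(φ - φ.comp T) u| ≤ ‖φ - φ.comp T‖ * ‖u‖ := (φ - φ.comp T).le_opNorm u
            _ ≤ ‖φ - φ.comp T‖ * dist x y :=
                mul_le_mul_of_nonneg_left hu (norm_nonneg _)
        obtain ⟨A2, hA2def⟩ : ∃ A2 : ℝ, A2 = (φ.comp T - ∑ k, c k • v k) u := ⟨_, rfl⟩
        have hA2 : |A2| ≤ ε₂ * dist x y := by
          rw [hA2def]
          calc |(φ.comp T - ∑ k, c k • v k) u| ≤ ‖φ.comp T - ∑ k, c k • v k‖ * ‖u‖ :=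
                (φ.comp T - ∑ k, c k • v k).le_opNorm u
            _ ≤ ε₂ * dist x y := by
                apply mul_le_mul happ.le hu (norm_nonneg _) hε₂0.le
        obtain ⟨A3, hA3def⟩ : ∃ A3 : ℝ, A3 = (∑ k, c k • v k) u - cs * (f x - f y) :=
          ⟨_, rfl⟩
        have hA3 : |A3| ≤ δ' * dist x y := by
          have hfu : f x - f y = y₁ u := by rw [hudef, hfsub]
          have hexp : A3 = ∑ k, c k * ((v k) u - y₁ u) := by
            rw [hA3def, hfu, hcsdef, ContinuousLinearMap.sum_apply, Finset.sum_mul,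
              ← Finset.sum_sub_distrib]
            congr 1
            ext k
            rw [ContinuousLinearMap.smul_apply, smul_eq_mul]
            ring
          rw [hexp]
          have hterm : ∀ k : Fin n, |c k * ((v k) u - y₁ u)| ≤ |c k| * (δ' * dist x y) := by
            intro k
            rw [abs_mul]
            apply mul_le_mul_of_nonneg_left _ (abs_nonneg _)
            have hvk : v k ∈ W' ∩ Γ := hVsub (hvV k)
            have := hflat (v k) hvk y₁ ⟨hy₁W', hy₁Γ⟩ x y
            rw [hudef]
            simpa using this
          calc |∑ k, c k * ((v k) u - y₁ u)| ≤ ∑ k, |c k * ((v k) u - y₁ u)| :=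
                Finset.abs_sum_le_sum_abs _ _
            _ ≤ ∑ k, |c k| * (δ' * dist x y) := Finset.sum_le_sum (fun k _ => hterm k)
            _ = (∑ k, |c k|) * (δ' * dist x y) := by rw [Finset.sum_mul]
            _ ≤ 1 * (δ' * dist x y) := by
                apply mul_le_mul_of_nonneg_right hcsum (by positivity)
            _ = δ' * dist x y := by ring
        have e4 : |φ Se - cs| ≤ 2 * ε₂ := by
          have h41 : |φ Se - (∑ k, c k • v k) e| ≤ ε₂ := by
            have hω : φ Se - (∑ k, c k • v k) e = (φ.comp T - ∑ k, c k • v k) e := by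
              rw [ContinuousLinearMap.sub_apply, ContinuousLinearMap.comp_apply, hSedef]
            rw [hω]
            calc |(φ.comp T - ∑ k, c k • v k) e| ≤ ‖φ.comp T - ∑ k, c k • v k‖ * ‖e‖ :=
                  (φ.comp T - ∑ k, c k • v k).le_opNorm e
              _ ≤ ε₂ * 1 := by
                  rw [he]; exact mul_le_mul_of_nonneg_right happ.le zero_le_one
              _ = ε₂ := by ring
          have h42 : |(∑ k, c k • v k) e - cs| ≤ ε₂ := by
            have hexp : (∑ k, c k • v k) e - cs = ∑ k, c k * ((v k) e - 1) := by
              rw [hcsdef, ContinuousLinearMap.sum_apply, ← Finset.sum_sub_distrib]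
              congr 1
              ext k
              rw [ContinuousLinearMap.smul_apply, smul_eq_mul]
              ring
            rw [hexp]
            calc |∑ k, c k * ((v k) e - 1)| ≤ ∑ k, |c k * ((v k) e - 1)| :=
                  Finset.abs_sum_le_sum_abs _ _
              _ ≤ ∑ k, |c k| * ε₂ := by
                  apply Finset.sum_le_sum
                  intro k _
                  rw [abs_mul]
                  exact mul_le_mul_of_nonneg_left (h6 (v k) (hvV k)) (abs_nonneg _)
              _ = (∑ k, |c k|) * ε₂ := by rw [Finset.sum_mul]
              _ ≤ 1 * ε₂ := mul_le_mul_of_nonneg_right hcsum hε₂0.le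
              _ = ε₂ := by ring
          calc |φ Se - cs| = |(φ Se - (∑ k, c k • v k) e) + ((∑ k, c k • v k) e - cs)| := by
                ring_nf
            _ ≤ |φ Se - (∑ k, c k • v k) e| + |(∑ k, c k • v k) e - cs| := abs_add_le _ _
            _ ≤ 2 * ε₂ := by linarith
        have e5 : |cs| ≤ ‖φ.comp T‖ + 3 * ε₂ := by
          have h51 : |φ Se| ≤ ‖φ.comp T‖ := by
            have hω : φ Se = (φ.comp T) e := by
              rw [ContinuousLinearMap.comp_apply, hSedef]
            rw [hω]
            calc |(φ.comp T) e| ≤ ‖φ.comp T‖ * ‖e‖ := (φ.comp T).le_opNorm e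
              _ = ‖φ.comp T‖ := by rw [he]; ring
          have h52 : |cs| ≤ |φ Se| + 2*ε₂ := by
            have := abs_sub_abs_le_abs_sub cs (φ Se)
            rw [abs_sub_comm cs (φ Se)] at this
            linarith
          linarith
        obtain ⟨A4, hA4def⟩ : ∃ A4 : ℝ, A4 = cs * ((f x - f y) + aa) := ⟨_, rfl⟩
        have hsum_g : (f x - f y) + aa = (1 + t) * (g x - g y) := by
          rw [haadef, hadef, hadef]; ring
        have hA4' : |A4| ≤ (‖φ.comp T‖ + 3*ε₂) * ((1+t) * dist x y) := by
          rw [hA4def, abs_mul, hsum_g]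
          have hb1 : |(1 + t) * (g x - g y)| ≤ (1+t) * dist x y := by
            rw [abs_mul, abs_of_nonneg (by linarith : (0:ℝ) ≤ 1 + t)]
            have hb2 := hgpt x y
            rw [Real.norm_eq_abs] at hb2
            have hb3 : |g x - g y| ≤ dist x y := by linarith only [hb2]
            exact mul_le_mul_of_nonneg_left hb3 (by linarith only [ht0])
          apply mul_le_mul e5 hb1 (abs_nonneg _) (by positivity)
        obtain ⟨A5, hA5def⟩ : ∃ A5 : ℝ, A5 = aa * (φ Se - cs) := ⟨_, rfl⟩
        have hA5 : |A5| ≤ ((bb + t) * dist x y) * (2 * ε₂) := by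
          rw [hA5def, abs_mul]
          apply mul_le_mul haa e4 (abs_nonneg _) (by positivity)
        have hdecomp : φ (G₀ x - G₀ y) = A1 + A2 + A3 + A4 + A5 := by
          rw [hval, hA1def, hA2def, hA3def, hA4def, hA5def]
          simp only [ContinuousLinearMap.sub_apply, ContinuousLinearMap.comp_apply]
          ring
        rw [hdecomp]
        have habs : |A1 + A2 + A3 + A4 + A5| ≤ |A1| + |A2| + |A3| + |A4| + |A5| := by
          calc |A1 + A2 + A3 + A4 + A5| ≤ |A1 + A2 + A3 + A4| + |A5| := abs_add_le _ _
            _ ≤ |A1 + A2 + A3| + |A4| + |A5| := by linarith [abs_add_le (A1 + A2 + A3) A4]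
            _ ≤ |A1 + A2| + |A3| + |A4| + |A5| := by linarith [abs_add_le (A1 + A2) A3]
            _ ≤ |A1| + |A2| + |A3| + |A4| + |A5| := by linarith [abs_add_le A1 A2]
        have hP0 : 0 ≤ ‖φ - φ.comp T‖ := norm_nonneg _
        have hQ0 : 0 ≤ ‖φ.comp T‖ := norm_nonneg _
        obtain ⟨P, hPdef⟩ : ∃ P : ℝ, P = ‖φ - φ.comp T‖ := ⟨_, rfl⟩
        obtain ⟨Q, hQdef⟩ : ∃ Q : ℝ, Q = ‖φ.comp T‖ := ⟨_, rfl⟩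
        obtain ⟨dd, hdddef⟩ : ∃ dd : ℝ, dd = dist x y := ⟨_, rfl⟩
        rw [← hPdef] at hA1 hV₁ hsub2 hP0
        rw [← hQdef] at hA4' hV₁ hQ0
        rw [← hdddef] at hA1 hA2 hA3 hA4' hA5 ⊢
        have hdd0 : 0 ≤ dd := by rw [hdddef]; exact hdpos
        have c4' : |A4| ≤ ((Q + 3*ε₂) * (1+t)) * dd := by
          calc |A4| ≤ (Q + 3*ε₂) * ((1+t) * dd) := hA4'
            _ = ((Q + 3*ε₂) * (1+t)) * dd := by ring
        have c5' : |A5| ≤ ((bb + t) * (2*ε₂)) * dd := by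
          calc |A5| ≤ ((bb + t) * dd) * (2 * ε₂) := hA5
            _ = ((bb + t) * (2*ε₂)) * dd := by ring
        have k1 : Q + 3*ε₂ ≤ 1 - P + ε₂*P + 3*ε₂ := by
          have hx : (1 - ε₂)*P = P - ε₂*P := by ring
          linarith only [hV₁, hx]
        have k2 : (Q + 3*ε₂) * (1+t) ≤ (1 - P + ε₂*P + 3*ε₂) * (1+t) :=
          mul_le_mul_of_nonneg_right k1 (by linarith)
        have k4 : (ε₂*P + 3*ε₂)*(1+t) ≤ 10*ε₂ := by
          have k4a : ε₂*P ≤ ε₂*2 := mul_le_mul_of_nonneg_left hsub2 hε₂0.le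
          have k4b : ε₂*P + 3*ε₂ ≤ 5*ε₂ := by linarith only [k4a]
          have k4c : 0 ≤ ε₂*P := mul_nonneg hε₂0.le hP0
          have k4d : (ε₂*P + 3*ε₂)*(1+t) ≤ (5*ε₂)*(1+t) :=
            mul_le_mul_of_nonneg_right k4b (by linarith only [ht0])
          have k4e : (5*ε₂)*(1+t) ≤ (5*ε₂)*2 :=
            mul_le_mul_of_nonneg_left (by linarith only [ht1]) (by linarith only [hε₂0])
          linarith only [k4d, k4e]
        have k5 : (bb + t) * (2*ε₂) ≤ 3*ε₂ := by
          have k5a : bb + t ≤ 3/2 := by linarith only [hbb1, ht1]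
          have k5b : (bb + t) * (2*ε₂) ≤ (3/2) * (2*ε₂) :=
            mul_le_mul_of_nonneg_right k5a (by linarith only [hε₂0])
          linarith only [k5b]
        have k6 : P ≤ P*(1+t) := by
          have k6a := mul_nonneg hP0 ht0
          have k6b : P*(1+t) = P + P*t := by ring
          linarith only [k6a, k6b]
        have hcoef : P + ε₂ + δ' + (Q + 3*ε₂)*(1+t) + (bb + t)*(2*ε₂) ≤ (1+t)*(1+W₂) := by
          have k3 : (1 - P + ε₂*P + 3*ε₂) * (1+t)
              = (1+t) - P*(1+t) + (ε₂*P + 3*ε₂)*(1+t) := by ring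
          have knum : ε₂ = W/80 := hε₂def
          have knum2 : δ' = W/8 := hδ'def
          have knum3 : W₂ = W/2 := hW₂def
          have k7 : W₂ ≤ (1+t)*W₂ := by
            have k7a := mul_nonneg ht0 hW₂0.le
            have k7b : (1+t)*W₂ = W₂ + t*W₂ := by ring
            linarith only [k7a, k7b]
          have k8 : 0 ≤ ε₂*t := mul_nonneg hε₂0.le ht0
          linarith only [k2, k3, k4, k5, k6, k7, k8, knum, knum2, knum3, hW0]
        have hcoefd : (P + ε₂ + δ' + (Q + 3*ε₂)*(1+t) + (bb + t)*(2*ε₂)) * dd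
            ≤ ((1+t)*(1+W₂)) * dd := mul_le_mul_of_nonneg_right hcoef hdd0
        have hexpand : (P + ε₂ + δ' + (Q + 3*ε₂)*(1+t) + (bb + t)*(2*ε₂)) * dd
            = P*dd + ε₂*dd + δ'*dd + ((Q + 3*ε₂)*(1+t))*dd + ((bb + t)*(2*ε₂))*dd := by
          ring
        linarith [habs, hcoefd, hexpand.le, hexpand.ge, hA1, hA2, hA3, c4', c5']
      · -- bad case: |φ Se| ≤ ρ
        have hρφ : |φ Se| ≤ ρ := by
          rw [hSedef]
          apply h4 φ hφΓ
          intro hmem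
          exact hV₁ hmem.2
        rw [hval]
        have h1 : |φ u| ≤ dist x y := by
          calc |φ u| ≤ ‖φ‖ * ‖u‖ := φ.le_opNorm u
            _ ≤ 1 * dist x y := mul_le_mul hφ1 hu (norm_nonneg _) zero_le_one
            _ = dist x y := by ring
        have h2 : |aa * φ Se| ≤ ((bb + t) * dist x y) * ρ := by
          rw [abs_mul]
          apply mul_le_mul haa hρφ (abs_nonneg _) (by positivity)
        have h3 : (bb + t) * ρ ≤ t := by
          have h3a : (bb + t) * ρ = ρ*bb + t*ρ := by ring
          have h3b : t*(1-ρ) = t - t*ρ := by ring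
          linarith only [ht_eq, h3a, h3b]
        calc |φ u + aa * φ Se| ≤ |φ u| + |aa * φ Se| := abs_add_le _ _
          _ ≤ dist x y + ((bb + t) * dist x y) * ρ := by linarith
          _ ≤ dist x y + t * dist x y := by
              have h3c : ((bb + t) * dist x y) * ρ = ((bb + t) * ρ) * dist x y := by ring
              have h3d := mul_le_mul_of_nonneg_right h3 hdpos
              linarith only [h3c, h3d]
          _ = (1 + t) * dist x y := by ring
          _ ≤ ((1 + t) * (1 + W₂)) * dist x y := by
              have e2 : 0 ≤ (1+t)*W₂ := mul_nonneg (by linarith only [ht0]) hW₂0.le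
              have e3 : (1+t) ≤ (1+t)*(1+W₂) := by linarith only [e2]
              exact mul_le_mul_of_nonneg_right e3 hdpos
  -- lipNorm of G₀
  have hG₀cert : ∃ C, 0 ≤ C ∧ PtLip G₀ C := ⟨(1+t)*(1+W₂), by positivity, key⟩
  obtain ⟨N, hNdef⟩ : ∃ N : ℝ, N = lipNorm G₀ := ⟨_, rfl⟩
  have hNle : N ≤ (1 + t) * (1 + W₂) := by
    rw [hNdef]; exact lipNorm_le (by positivity) key
  have hG₀pt : PtLip G₀ N := by rw [hNdef]; exact ptLip_lipNorm hG₀cert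
  have hy₁G₀ : y₁ (G₀ r - G₀ s) = (1 + t) * (g r - g s) := by
    rw [hG₀sub r s, map_add, ContinuousLinearMap.map_smul, smul_eq_mul, hy₁Se,
      map_sub, ← hfdef, ← hfdef, hadef, hadef]
    ring
  have hgrs : |g r - g s| = dist r s := by
    have := hgatt
    rwa [Real.norm_eq_abs] at this
  have hG₀rs : (1 + t) * dist r s ≤ ‖G₀ r - G₀ s‖ := by
    have h1 : |y₁ (G₀ r - G₀ s)| ≤ ‖y₁‖ * ‖G₀ r - G₀ s‖ := y₁.le_opNorm _
    have h2 : |y₁ (G₀ r - G₀ s)| = (1 + t) * dist r s := by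
      rw [hy₁G₀, abs_mul, abs_of_nonneg (by linarith : (0:ℝ) ≤ 1 + t), hgrs]
    nlinarith only [h1, h2, hy₁n, norm_nonneg (G₀ r - G₀ s)]
  have hNge : 1 + t ≤ N := by
    have h1 : ‖G₀ r - G₀ s‖ / dist r s ≤ N := by
      rw [hNdef]; exact div_le_lipNorm key hrs
    rw [div_le_iff₀ hdrs] at h1
    nlinarith only [h1, hG₀rs, hdrs]
  have hN0 : 0 < N := by linarith
  have hN1 : 1 ≤ N := by linarith
  have hNinv1 : N⁻¹ ≤ 1 := by
    rw [inv_le_one_iff₀]; right; exact hN1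
  obtain ⟨G, hGdefn⟩ : ∃ G : M → Y, ∀ x, G x = N⁻¹ • G₀ x := ⟨_, fun _ => rfl⟩
  have hGeq : G = fun x => (lipNorm G₀)⁻¹ • G₀ x := by
    funext x; rw [hGdefn, hNdef]
  have hG1 : lipNorm G = 1 := by
    rw [hGeq]
    exact lipNorm_inv_smul hG₀cert (by rw [← hNdef]; exact hN0)
  have hGsub : ∀ x y : M, G x - G y = N⁻¹ • (G₀ x - G₀ y) := by
    intro x y; rw [hGdefn, hGdefn, smul_sub]
  refine ⟨G, r, s, ⟨⟨((1+t)*(1+W₂)).toNNReal, ?_⟩, ?_⟩, ?_, hG1, hrs, ?_, ?_, ?_⟩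
  · -- Lipschitz
    apply lipschitz_of_ptLip
    intro x y
    rw [hGsub x y, norm_smul, Real.norm_eq_abs, abs_of_pos (inv_pos.2 hN0)]
    calc N⁻¹ * ‖G₀ x - G₀ y‖ ≤ 1 * (((1+t)*(1+W₂)) * dist x y) := by
          apply mul_le_mul hNinv1 (key x y) (norm_nonneg _) zero_le_one
      _ = ((1+t)*(1+W₂)) * dist x y := by ring
  · -- G z = 0
    have hgz : g z = 0 := hg0.2
    have haz : a z = 0 := by rw [hadef, hgz, hfz]; ring
    rw [hGdefn, hG₀def, haz, hF0.2]
    simp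
  · -- IsLipCompact G
    have hKF : IsCompact (closure {w : Y | ∃ x y : M, x ≠ y ∧ w = (dist x y)⁻¹ • (F x - F y)}) := hFc
    have hbigC : IsCompact ((fun pr : Y × ℝ => N⁻¹ • (pr.1 + pr.2 • Se)) ''
        ((closure {w : Y | ∃ x y : M, x ≠ y ∧ w = (dist x y)⁻¹ • (F x - F y)}) ×ˢ
          Set.Icc (-(bb+t)) (bb+t))) := by
      apply IsCompact.image (hKF.prod isCompact_Icc)
      fun_prop
    apply IsCompact.of_isClosed_subset hbigC isClosed_closure
    apply closure_minimal _ hbigC.isClosed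
    rintro w ⟨x, y, hxy, rfl⟩
    have hdxy : 0 < dist x y := dist_pos.2 hxy
    refine ⟨((dist x y)⁻¹ • (F x - F y), (a x - a y) / dist x y), ⟨?_, ?_⟩, ?_⟩
    · exact subset_closure ⟨x, y, hxy, rfl⟩
    · have := hapt x y
      rw [Set.mem_Icc]
      constructor
      · rw [le_div_iff₀ hdxy]
        have := (abs_le.1 (hapt x y)).1
        linarith only [this]
      · rw [div_le_iff₀ hdxy]
        have := (abs_le.1 (hapt x y)).2
        linarith only [this]
    · show N⁻¹ • ((dist x y)⁻¹ • (F x - F y) + ((a x - a y) / dist x y) • Se)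
          = (dist x y)⁻¹ • (G x - G y)
      rw [hGsub x y, hG₀sub x y, div_eq_inv_mul, ← smul_smul (dist x y)⁻¹ (a x - a y) Se,
        ← smul_add, smul_comm]
  · -- attainment
    have hX : ‖G r - G s‖ = N⁻¹ * ‖G₀ r - G₀ s‖ := by
      rw [hGsub r s, norm_smul, Real.norm_eq_abs, abs_of_pos (inv_pos.2 hN0)]
    rw [hX]
    have hkey : (1 - W) * dist r s * N < ‖G₀ r - G₀ s‖ := by
      have h1 : (1 - W) * (1 + W₂) < 1 := by rw [hW₂def]; nlinarith only [hW0, hW1]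
      have h2 : (1 - W) * dist r s * N ≤ (1 - W) * dist r s * ((1+t)*(1+W₂)) := by
        rcases le_or_gt (1 - W) 0 with hc | hc
        · have hW1' : (1:ℝ) - W = 0 := by linarith only [hc, hW1]
          rw [hW1']
          simp
        · apply mul_le_mul_of_nonneg_left hNle (by positivity)
      have h3 : (1 - W) * dist r s * ((1+t)*(1+W₂)) < (1+t) * dist r s := by
        have h3a : 0 < (1+t) * dist r s :=
          mul_pos (by linarith only [ht0]) hdrs
        nlinarith only [h1, h3a]
      linarith [hG₀rs]
    calc (1 - W) * dist r s = ((1 - W) * dist r s * N) * N⁻¹ := by field_simp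
      _ < ‖G₀ r - G₀ s‖ * N⁻¹ := by
          apply mul_lt_mul_of_pos_right hkey (inv_pos.2 hN0)
      _ = N⁻¹ * ‖G₀ r - G₀ s‖ := by ring
  · -- closeness
    intro x y
    have h1 : (G x - F x) - (G y - F y) = (N⁻¹ - 1) • (G₀ x - G₀ y) + (a x - a y) • Se := by
      have e1 : ∀ w : M, G w - F w = (N⁻¹ - 1) • G₀ w + a w • Se := by
        intro w
        rw [hGdefn, sub_smul, one_smul, hG₀def]
        abel
      rw [e1 x, e1 y]
      module
    rw [h1]
    have h2 : ‖(N⁻¹ - 1) • (G₀ x - G₀ y)‖ ≤ (N - 1) * dist x y := by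
      rw [norm_smul, Real.norm_eq_abs, abs_of_nonpos (by linarith : N⁻¹ - 1 ≤ 0)]
      have h3 := hG₀pt x y
      have h5 : (1 - N⁻¹) * ‖G₀ x - G₀ y‖ ≤ (1 - N⁻¹) * (N * dist x y) := by
        apply mul_le_mul_of_nonneg_left h3 (by linarith)
      have h6 : (1 - N⁻¹) * N = N - 1 := by field_simp
      have h7 : -(N⁻¹ - 1) = 1 - N⁻¹ := by ring
      rw [h7]
      have h8 : (1 - N⁻¹) * (N * dist x y) = ((1 - N⁻¹) * N) * dist x y := by ring
      have h9 : ((1 - N⁻¹) * N) * dist x y = (N - 1) * dist x y := by rw [h6]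
      linarith only [h5, h8, h9]
    have h3 : ‖(a x - a y) • Se‖ ≤ (bb + t) * dist x y := by
      rw [norm_smul, Real.norm_eq_abs, hSen, mul_one]
      exact hapt x y
    have h4 : N - 1 ≤ t + W := by
      have h8 : W₂ * (1 + t) ≤ W₂ * 2 :=
        mul_le_mul_of_nonneg_left (by linarith only [ht1]) hW₂0.le
      have h9 : W₂ = W/2 := hW₂def
      linarith only [hNle, h8, h9]
    have h5 : 2 * t + bb ≤ 3 * bb / (1 - ρ) := by
      rw [div_eq_inv_mul]
      have h6 : (2 * t + bb) * (1 - ρ) ≤ 3 * bb := by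
        have h6a : ρ*bb ≤ 1*bb := mul_le_mul_of_nonneg_right hρ1.le hbb0.le
        have h6b : (2 * t + bb) * (1 - ρ) = 2*(t*(1-ρ)) + bb - bb*ρ := by ring
        linarith only [ht_eq, h6a, h6b, hbb0]
      have h7 : 0 < (1 - ρ)⁻¹ := inv_pos.2 h1ρ
      calc 2 * t + bb = (1 - ρ)⁻¹ * ((2 * t + bb) * (1 - ρ)) := by field_simp
        _ ≤ (1 - ρ)⁻¹ * (3 * bb) := by
            apply mul_le_mul_of_nonneg_left h6 h7.le
    have hfinal : N - 1 + (bb + t) ≤ 3 * (ε₁ + D) / (1 - ρ) + W := by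
      rw [← hbbdef]
      linarith
    calc ‖(N⁻¹ - 1) • (G₀ x - G₀ y) + (a x - a y) • Se‖
        ≤ ‖(N⁻¹ - 1) • (G₀ x - G₀ y)‖ + ‖(a x - a y) • Se‖ := norm_add_le _ _
      _ ≤ (N - 1) * dist x y + (bb + t) * dist x y := add_le_add h2 h3
      _ = (N - 1 + (bb + t)) * dist x y := by ring
      _ ≤ (3 * (ε₁ + D) / (1 - ρ) + W) * dist x y :=
          mul_le_mul_of_nonneg_right hfinal dist_nonneg
  · -- drift
    have := hgdrift
    rw [div_lt_iff₀ (by rw [hddef] at hd0; exact hd0)] at this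
    linarith

end StepLemma
set_option maxHeartbeats 2000000 in
theorem lipBPBCompact_of_ACK {M Y : Type*} [MetricSpace M] [CompleteSpace M]
    [NormedAddCommGroup Y] [NormedSpace ℝ Y] [CompleteSpace Y]
    (z : M) (hM : LipBPB M z ℝ)
    (ρ : ℝ) (hρ0 : 0 ≤ ρ) (hρ1 : ρ < 1) (hY : HasACK Y ρ) :
    LipBPBCompact M z Y := by
  classical
  obtain ⟨η₀, hη⟩ := hM
  obtain ⟨Γ, hACK⟩ := hY
  have h1ρ : 0 < 1 - ρ := by linarith
  obtain ⟨ηf, hηfdef⟩ : ∃ f : ℝ → ℝ, ∀ e : ℝ, f e =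
      if 0 < e then (1/2) * min (η₀ (min e 1 * (1-ρ)/64)) (min (min e 1 * (1-ρ)/64) 1)
      else 1 := ⟨_, fun _ => rfl⟩
  refine ⟨ηf, ?_, ?_⟩
  · intro ε hε
    rw [hηfdef, if_pos (show (0:ℝ) < ε from hε)]
    have h1 : 0 < min ε 1 := lt_min hε one_pos
    have h2 : 0 < min ε 1 * (1-ρ)/64 := by
      apply div_pos (mul_pos h1 h1ρ) (by norm_num)
    have h3 : 0 < η₀ (min ε 1 * (1-ρ)/64) := hη.1 _ h2
    have : (0:ℝ) < min (η₀ (min ε 1 * (1-ρ)/64)) (min (min ε 1 * (1-ρ)/64) 1) :=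
      lt_min h3 (lt_min h2 one_pos)
    linarith
  intro ε hε F hF0 hFc hF1 p q hpq hdef
  rw [hηfdef, if_pos (show (0:ℝ) < ε from hε)] at hdef
  obtain ⟨m, hmdef⟩ : ∃ m : ℝ, m = min ε 1 := ⟨_, rfl⟩
  have hm0 : 0 < m := by rw [hmdef]; exact lt_min hε one_pos
  have hm1 : m ≤ 1 := by rw [hmdef]; exact min_le_right _ _
  have hmε : m ≤ ε := by rw [hmdef]; exact min_le_left _ _
  obtain ⟨E, hEdef⟩ : ∃ E : ℝ, E = m * (1-ρ)/64 := ⟨_, rfl⟩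
  have hE0 : 0 < E := by rw [hEdef]; exact div_pos (mul_pos hm0 h1ρ) (by norm_num)
  have hEcap : E ≤ 1/64 := by
    rw [hEdef]
    have := mul_nonneg hm0.le hρ0
    linarith only [hm1, this]
  obtain ⟨B, hBdef⟩ : ∃ B : ℝ, B = m/8 := ⟨_, rfl⟩
  have hB0 : 0 < B := by rw [hBdef]; positivity
  obtain ⟨Dse, hDsedef⟩ : ∃ f : ℕ → ℝ,
      ∀ n, f n = (1/2) * min (η₀ (E * (1/2)^n)) (min (E * (1/2)^n) 1) :=
    ⟨_, fun _ => rfl⟩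
  have he₁0 : ∀ n : ℕ, (0:ℝ) < E * (1/2)^n := fun n => by positivity
  have hpowle : ∀ n : ℕ, ((1:ℝ)/2)^n ≤ 1 := fun n =>
    pow_le_one₀ (by norm_num) (by norm_num)
  have hpow0 : ∀ n : ℕ, (0:ℝ) < (1/2)^n := fun n => by positivity
  have hD0 : ∀ n, 0 < Dse n := by
    intro n
    rw [hDsedef]
    have h3 : 0 < η₀ (E * (1/2)^n) := hη.1 _ (he₁0 n)
    have := lt_min h3 (lt_min (he₁0 n) one_pos)
    linarith
  have hDle : ∀ n, Dse n ≤ E * (1/2)^n := by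
    intro n
    rw [hDsedef]
    have h1 : min (η₀ (E * (1/2)^n)) (min (E * (1/2)^n) 1) ≤ E * (1/2)^n :=
      le_trans (min_le_right _ _) (min_le_left _ _)
    have h2 : 0 < min (η₀ (E * (1/2)^n)) (min (E * (1/2)^n) 1) :=
      lt_min (hη.1 _ (he₁0 n)) (lt_min (he₁0 n) one_pos)
    linarith
  have hDη : ∀ n, Dse n ≤ η₀ (E * (1/2)^n) := by
    intro n
    rw [hDsedef]
    have h1 : min (η₀ (E * (1/2)^n)) (min (E * (1/2)^n) 1) ≤ η₀ (E * (1/2)^n) :=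
      min_le_left _ _
    have h2 : 0 < min (η₀ (E * (1/2)^n)) (min (E * (1/2)^n) 1) :=
      lt_min (hη.1 _ (he₁0 n)) (lt_min (he₁0 n) one_pos)
    linarith
  have hD1 : ∀ n, Dse n ≤ 1 := by
    intro n
    have h1 := hDle n
    have h2 : E * (1/2)^n ≤ 1 := by nlinarith only [hEcap, hpowle n, hpow0 n, hE0]
    linarith
  have hEE : E = m * (1-ρ)/64 := hEdef
  -- per-step coefficient bound
  have hcb : ∀ n : ℕ, 3 * (E * (1/2)^n + Dse n) / (1-ρ) + Dse (n+1) ≤ B * (1/2)^n := by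
    intro n
    have hD := hDle n
    have hD' := hDle (n+1)
    have key0 : 3 * (E * (1/2)^n + Dse n) / (1-ρ) ≤ (m * (3/32)) * (1/2)^n := by
      rw [div_le_iff₀ h1ρ]
      have h1 : 3 * (E * (1/2)^n + Dse n) ≤ 6 * (E * (1/2)^n) := by linarith
      calc 3 * (E * (1/2)^n + Dse n) ≤ 6 * (E * (1/2)^n) := h1
        _ = (m * (3/32)) * (1/2)^n * (1-ρ) := by rw [hEE]; ring
    have key1 : Dse (n+1) ≤ (m * (1/128)) * (1/2)^n := by
      calc Dse (n+1) ≤ E * (1/2)^(n+1) := hD'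
        _ = (E/2) * (1/2)^n := by rw [pow_succ]; ring
        _ ≤ (m * (1/128)) * (1/2)^n := by
            apply mul_le_mul_of_nonneg_right _ (hpow0 n).le
            rw [hEE]
            have := mul_nonneg hm0.le hρ0
            linarith only [this]
    calc 3 * (E * (1/2)^n + Dse n) / (1-ρ) + Dse (n+1)
        ≤ (m * (3/32)) * (1/2)^n + (m * (1/128)) * (1/2)^n := add_le_add key0 key1
      _ = (m * (13/128)) * (1/2)^n := by ring
      _ ≤ B * (1/2)^n := by
          apply mul_le_mul_of_nonneg_right _ (hpow0 n).le
          rw [hBdef]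
          linarith only [hm0]
  -- the invariant
  obtain ⟨P, hPdef⟩ : ∃ P : ℕ → ((M → Y) × M × M) → Prop, ∀ n X,
      P n X ↔ (IsLip0 z X.1 ∧ IsLipCompact X.1 ∧ lipNorm X.1 = 1 ∧ X.2.1 ≠ X.2.2 ∧
        ‖X.1 X.2.1 - X.1 X.2.2‖ > (1 - Dse n) * dist X.2.1 X.2.2) :=
    ⟨_, fun _ _ => Iff.rfl⟩
  have hstep : ∀ n (X : (M → Y) × M × M), P n X → ∃ X' : (M → Y) × M × M,
      P (n+1) X' ∧
      (∀ x y : M, ‖(X'.1 x - X.1 x) - (X'.1 y - X.1 y)‖ ≤ B * (1/2)^n * dist x y) ∧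
      dist X.2.1 X'.2.1 + dist X.2.2 X'.2.2 ≤ E * (1/2)^n * dist X.2.1 X.2.2 := by
    intro n X hX
    rw [hPdef] at hX
    obtain ⟨h1, h2, h3, h4, h5⟩ := hX
    have hρcap : ρ * (E * (1/2)^n + Dse n) / (1-ρ) ≤ 1 := by
      rw [div_le_one h1ρ]
      have ha : E * (1/2)^n + Dse n ≤ 2 * E := by
        nlinarith only [hDle n, hpowle n, hpow0 n, hE0]
      have hb : E ≤ (1-ρ)/64 := by
        rw [hEE]
        have := mul_le_mul_of_nonneg_right hm1 h1ρ.le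
        linarith only [this]
      have hS0 : 0 ≤ E * (1/2)^n + Dse n :=
        add_nonneg (he₁0 n).le (hD0 n).le
      have hprod : 0 ≤ (1-ρ) * (E * (1/2)^n + Dse n) :=
        mul_nonneg h1ρ.le hS0
      nlinarith only [ha, hb, hprod, h1ρ, hS0]
    obtain ⟨G', r', s', o1, o2, o3, o4, o5, o6, o7⟩ :=
      step_lemma z hρ0 hρ1 hACK hη X.1 X.2.1 X.2.2 h1 h2 h3 h4
        (E * (1/2)^n) (Dse n) (Dse (n+1))
        (he₁0 n) (by nlinarith only [hEcap, hpowle n, hpow0 n, hE0]) (hD0 n) (hDle n) (hDη n)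
        (hD0 (n+1)) (hD1 (n+1)) hρcap h5
    refine ⟨(G', r', s'), ?_, ?_, o7⟩
    · rw [hPdef]
      exact ⟨o1, o2, o3, o4, o5⟩
    · intro x y
      exact le_trans (o6 x y)
        (mul_le_mul_of_nonneg_right (hcb n) dist_nonneg)
  -- base case
  have hdef0 : P 0 (F, p, q) := by
    rw [hPdef]
    refine ⟨hF0, hFc, hF1, hpq, ?_⟩
    have hE0eq : E * ((1:ℝ)/2)^0 = min ε 1 * (1-ρ)/64 := by
      rw [pow_zero, mul_one, hEdef, hmdef]
    show ‖F p - F q‖ > (1 - Dse 0) * dist p q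
    rw [hDsedef 0, hE0eq]
    exact hdef
  -- the chain
  let next : ℕ → ((M → Y) × M × M) → ((M → Y) × M × M) := fun n X =>
    if h : P n X then (hstep n X h).choose else X
  let chain : ℕ → (M → Y) × M × M := fun n => Nat.rec (F, p, q) next n
  have hchainsucc : ∀ n, chain (n+1) = next n (chain n) := fun n => rfl
  have hPall : ∀ n, P n (chain n) := by
    intro n
    induction n with
    | zero => exact hdef0
    | succ k ih =>
        rw [hchainsucc k, show next k (chain k) = (hstep k (chain k) ih).choose from
          dif_pos ih]
        exact (hstep k (chain k) ih).choose_spec.1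
  have hRall : ∀ n,
      (∀ x y : M, ‖((chain (n+1)).1 x - (chain n).1 x) - ((chain (n+1)).1 y - (chain n).1 y)‖
        ≤ B * (1/2)^n * dist x y) ∧
      dist (chain n).2.1 (chain (n+1)).2.1 + dist (chain n).2.2 (chain (n+1)).2.2
        ≤ E * (1/2)^n * dist (chain n).2.1 (chain n).2.2 := by
    intro n
    rw [hchainsucc n, show next n (chain n) = (hstep n (chain n) (hPall n)).choose from
      dif_pos (hPall n)]
    exact (hstep n (chain n) (hPall n)).choose_spec.2
  obtain ⟨Gs, hGsdef⟩ : ∃ f : ℕ → M → Y, ∀ n, f n = (chain n).1 := ⟨_, fun _ => rfl⟩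
  obtain ⟨ps, hpsdef⟩ : ∃ f : ℕ → M, ∀ n, f n = (chain n).2.1 := ⟨_, fun _ => rfl⟩
  obtain ⟨qs, hqsdef⟩ : ∃ f : ℕ → M, ∀ n, f n = (chain n).2.2 := ⟨_, fun _ => rfl⟩
  have hGs0 : Gs 0 = F := by rw [hGsdef]; rfl
  have hps0 : ps 0 = p := by rw [hpsdef]; rfl
  have hqs0 : qs 0 = q := by rw [hqsdef]; rfl
  have hInv : ∀ n, IsLip0 z (Gs n) ∧ IsLipCompact (Gs n) ∧ lipNorm (Gs n) = 1 ∧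
      ps n ≠ qs n ∧ ‖Gs n (ps n) - Gs n (qs n)‖ > (1 - Dse n) * dist (ps n) (qs n) := by
    intro n
    have := (hPdef n (chain n)).1 (hPall n)
    rw [hGsdef, hpsdef, hqsdef]
    exact this
  have hClose : ∀ n, ∀ x y : M,
      ‖(Gs (n+1) x - Gs n x) - (Gs (n+1) y - Gs n y)‖ ≤ B * (1/2)^n * dist x y := by
    intro n x y
    rw [hGsdef, hGsdef]
    exact (hRall n).1 x y
  have hDrift : ∀ n, dist (ps n) (ps (n+1)) + dist (qs n) (qs (n+1))
      ≤ E * (1/2)^n * dist (ps n) (qs n) := by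
    intro n
    rw [hpsdef, hpsdef, hqsdef, hqsdef]
    exact (hRall n).2
  have hGspt : ∀ n, PtLip (Gs n) 1 := by
    intro n
    have h := hInv n
    have := ptLip_lipNorm (exists_ptLip_of_isLip0 h.1.1)
    rwa [h.2.2.1] at this
  have hGsz : ∀ n, Gs n z = 0 := fun n => (hInv n).1.2
  -- distance control
  obtain ⟨d, hddef⟩ : ∃ d : ℝ, d = dist p q := ⟨_, rfl⟩
  have hd0 : 0 < d := by rw [hddef]; exact dist_pos.2 hpq
  obtain ⟨A, hAdef⟩ : ∃ f : ℕ → ℝ, ∀ n, f n = dist (ps n) (qs n) := ⟨_, fun _ => rfl⟩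
  have hA0 : A 0 = d := by rw [hAdef, hps0, hqs0, hddef]
  have hAnonneg : ∀ n, 0 ≤ A n := fun n => by rw [hAdef]; exact dist_nonneg
  have hAinv : ∀ n, |A n - d| ≤ 4*d*E*(1 - (1/2)^n) := by
    intro n
    induction n with
    | zero => rw [hA0]; simp
    | succ k ih =>
        have hA2d : A k ≤ 2*d := by
          have h1 : |A k - d| ≤ 4*d*E := by
            have hz : 0 ≤ 4*d*E*(1/2)^k :=
              mul_nonneg (by positivity) (hpow0 k).le
            linarith only [hz, ih]
          have h2 := abs_le.1 h1
          nlinarith only [h2.2, hEcap, hd0]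
        have hstep1 : |A (k+1) - A k| ≤ E * (1/2)^k * A k := by
          have i1 : A (k+1) ≤ A k + (dist (ps k) (ps (k+1)) + dist (qs k) (qs (k+1))) := by
            rw [hAdef, hAdef]
            have := dist_triangle4 (ps (k+1)) (ps k) (qs k) (qs (k+1))
            rw [dist_comm (ps (k+1)) (ps k)] at this
            linarith
          have i2 : A k ≤ A (k+1) + (dist (ps k) (ps (k+1)) + dist (qs k) (qs (k+1))) := by
            rw [hAdef, hAdef]
            have := dist_triangle4 (ps k) (ps (k+1)) (qs (k+1)) (qs k)
            rw [dist_comm (qs (k+1)) (qs k)] at this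
            linarith
          have := hDrift k
          rw [← hAdef] at this
          rw [abs_le]
          constructor <;> linarith
        have hb : E * (1/2)^k * A k ≤ E * (1/2)^k * (2*d) :=
          mul_le_mul_of_nonneg_left hA2d (by positivity)
        calc |A (k+1) - d| ≤ |A k - d| + |A (k+1) - A k| := by
              have := abs_add_le (A k - d) (A (k+1) - A k)
              have he : A (k+1) - d = (A k - d) + (A (k+1) - A k) := by ring
              rw [he]; linarith
          _ ≤ 4*d*E*(1 - (1/2)^k) + E * (1/2)^k * (2*d) := by linarith [hstep1, hb]
          _ = 4*d*E*(1 - (1/2)^(k+1)) := by rw [pow_succ]; ring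
  have hA2d : ∀ n, A n ≤ 2*d := by
    intro n
    have h1 : |A n - d| ≤ 4*d*E := by
      have hz : 0 ≤ 4*d*E*(1/2)^n := mul_nonneg (by positivity) (hpow0 n).le
      linarith only [hz, hAinv n]
    have h2 := abs_le.1 h1
    nlinarith only [h2.2, hEcap, hd0]
  have hAhalf : ∀ n, d/2 ≤ A n := by
    intro n
    have h1 : |A n - d| ≤ 4*d*E := by
      have hz : 0 ≤ 4*d*E*(1/2)^n := mul_nonneg (by positivity) (hpow0 n).le
      linarith only [hz, hAinv n]
    have h2 := abs_le.1 h1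
    nlinarith only [h2.1, hEcap, hd0]
  -- point drift
  have hpdrift : ∀ n, dist p (ps n) ≤ 4*d*E*(1 - (1/2)^n) ∧
      dist q (qs n) ≤ 4*d*E*(1 - (1/2)^n) := by
    intro n
    induction n with
    | zero => rw [hps0, hqs0]; simp
    | succ k ih =>
        have hstepp : dist (ps k) (ps (k+1)) ≤ E * (1/2)^k * (2*d) := by
          have h1 := hDrift k
          rw [← hAdef] at h1
          have h2 : E * (1/2)^k * A k ≤ E * (1/2)^k * (2*d) :=
            mul_le_mul_of_nonneg_left (hA2d k) (by positivity)
          have h3 : 0 ≤ dist (qs k) (qs (k+1)) := dist_nonneg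
          linarith
        have hstepq : dist (qs k) (qs (k+1)) ≤ E * (1/2)^k * (2*d) := by
          have h1 := hDrift k
          rw [← hAdef] at h1
          have h2 : E * (1/2)^k * A k ≤ E * (1/2)^k * (2*d) :=
            mul_le_mul_of_nonneg_left (hA2d k) (by positivity)
          have h3 : 0 ≤ dist (ps k) (ps (k+1)) := dist_nonneg
          linarith
        constructor
        · calc dist p (ps (k+1)) ≤ dist p (ps k) + dist (ps k) (ps (k+1)) :=
              dist_triangle _ _ _
            _ ≤ 4*d*E*(1 - (1/2)^k) + E * (1/2)^k * (2*d) := add_le_add ih.1 hstepp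
            _ = 4*d*E*(1 - (1/2)^(k+1)) := by rw [pow_succ]; ring
        · calc dist q (qs (k+1)) ≤ dist q (qs k) + dist (qs k) (qs (k+1)) :=
              dist_triangle _ _ _
            _ ≤ 4*d*E*(1 - (1/2)^k) + E * (1/2)^k * (2*d) := add_le_add ih.2 hstepq
            _ = 4*d*E*(1 - (1/2)^(k+1)) := by rw [pow_succ]; ring
  -- Cauchy sequences
  have hpsC : CauchySeq ps := by
    apply cauchySeq_of_le_geometric (1/2) (2*d*E) (by norm_num)
    intro n
    have h1 := hDrift n
    rw [← hAdef] at h1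
    have h2 : E * (1/2)^n * A n ≤ E * (1/2)^n * (2*d) :=
      mul_le_mul_of_nonneg_left (hA2d n) (by positivity)
    have h3 : 0 ≤ dist (qs n) (qs (n+1)) := dist_nonneg
    calc dist (ps n) (ps (n+1)) ≤ E * (1/2)^n * (2*d) := by linarith
      _ = 2*d*E * (1/2)^n := by ring
  have hqsC : CauchySeq qs := by
    apply cauchySeq_of_le_geometric (1/2) (2*d*E) (by norm_num)
    intro n
    have h1 := hDrift n
    rw [← hAdef] at h1
    have h2 : E * (1/2)^n * A n ≤ E * (1/2)^n * (2*d) :=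
      mul_le_mul_of_nonneg_left (hA2d n) (by positivity)
    have h3 : 0 ≤ dist (ps n) (ps (n+1)) := dist_nonneg
    calc dist (qs n) (qs (n+1)) ≤ E * (1/2)^n * (2*d) := by linarith
      _ = 2*d*E * (1/2)^n := by ring
  obtain ⟨roo, hroo⟩ := cauchySeq_tendsto_of_complete hpsC
  obtain ⟨soo, hsoo⟩ := cauchySeq_tendsto_of_complete hqsC
  -- function convergence
  have hGsC : ∀ x : M, CauchySeq (fun n => Gs n x) := by
    intro x
    apply cauchySeq_of_le_geometric (1/2) (B * dist x z) (by norm_num)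
    intro n
    have h1 := hClose n x z
    rw [hGsz n, hGsz (n+1)] at h1
    simp only [sub_zero] at h1
    rw [dist_eq_norm, norm_sub_rev]
    calc ‖Gs (n+1) x - Gs n x‖ ≤ B * (1/2)^n * dist x z := h1
      _ = B * dist x z * (1/2)^n := by ring
  have hGlim : ∀ x : M, ∃ l : Y, Filter.Tendsto (fun n => Gs n x) Filter.atTop (nhds l) :=
    fun x => cauchySeq_tendsto_of_complete (hGsC x)
  obtain ⟨Goo, hGoo⟩ : ∃ Goo : M → Y, ∀ x : M,
      Filter.Tendsto (fun n => Gs n x) Filter.atTop (nhds (Goo x)) :=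
    ⟨fun x => (hGlim x).choose, fun x => (hGlim x).choose_spec⟩
  -- spanning bound
  have hspan : ∀ n k : ℕ, ∀ x y : M,
      ‖(Gs (n+k) x - Gs n x) - (Gs (n+k) y - Gs n y)‖
        ≤ (2*B*(1/2)^n - 2*B*(1/2)^(n+k)) * dist x y := by
    intro n k
    induction k with
    | zero => intro x y; simp
    | succ j ih =>
        intro x y
        have h1 := hClose (n+j) x y
        have h2 := ih x y
        have h3 : (Gs (n+(j+1)) x - Gs n x) - (Gs (n+(j+1)) y - Gs n y) =
            ((Gs ((n+j)+1) x - Gs (n+j) x) - (Gs ((n+j)+1) y - Gs (n+j) y)) +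
            ((Gs (n+j) x - Gs n x) - (Gs (n+j) y - Gs n y)) := by
          have : n + (j+1) = (n+j) + 1 := by ring
          rw [this]
          abel
        rw [h3]
        calc ‖_ + _‖ ≤ ‖(Gs ((n+j)+1) x - Gs (n+j) x) - (Gs ((n+j)+1) y - Gs (n+j) y)‖
              + ‖(Gs (n+j) x - Gs n x) - (Gs (n+j) y - Gs n y)‖ := norm_add_le _ _
          _ ≤ B * (1/2)^(n+j) * dist x y
              + (2*B*(1/2)^n - 2*B*(1/2)^(n+j)) * dist x y := add_le_add h1 h2
          _ = (2*B*(1/2)^n - 2*B*(1/2)^(n+(j+1))) * dist x y := by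
              rw [show n+(j+1) = (n+j)+1 by ring, pow_succ]
              ring
  have hspan' : ∀ n k : ℕ, n ≤ k → ∀ x y : M,
      ‖(Gs k x - Gs n x) - (Gs k y - Gs n y)‖ ≤ (2*B*(1/2)^n) * dist x y := by
    intro n k hnk x y
    obtain ⟨j, rfl⟩ := Nat.exists_eq_add_of_le hnk
    calc ‖(Gs (n+j) x - Gs n x) - (Gs (n+j) y - Gs n y)‖
        ≤ (2*B*(1/2)^n - 2*B*(1/2)^(n+j)) * dist x y := hspan n j x y
      _ ≤ (2*B*(1/2)^n) * dist x y := by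
          apply mul_le_mul_of_nonneg_right _ dist_nonneg
          have hz : 0 ≤ 2*B*(1/2)^(n+j) :=
            mul_nonneg (by linarith only [hB0]) (hpow0 (n+j)).le
          linarith only [hz]
  have hTail : ∀ n : ℕ, ∀ x y : M,
      ‖(Goo x - Gs n x) - (Goo y - Gs n y)‖ ≤ (2*B*(1/2)^n) * dist x y := by
    intro n x y
    have hT : Filter.Tendsto (fun k => ‖(Gs k x - Gs n x) - (Gs k y - Gs n y)‖)
        Filter.atTop (nhds ‖(Goo x - Gs n x) - (Goo y - Gs n y)‖) :=
      (((hGoo x).sub tendsto_const_nhds).sub ((hGoo y).sub tendsto_const_nhds)).norm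
    apply le_of_tendsto hT
    filter_upwards [Filter.eventually_atTop.2 ⟨n, fun k hk => hspan' n k hk x y⟩] with k hk
    exact hk
  -- basic properties of the limit
  have hGoopt : PtLip Goo 1 := by
    intro x y
    have hT : Filter.Tendsto (fun n => ‖Gs n x - Gs n y‖) Filter.atTop
        (nhds ‖Goo x - Goo y‖) := (((hGoo x).sub (hGoo y))).norm
    apply le_of_tendsto hT
    exact Filter.Eventually.of_forall (fun n => hGspt n x y)
  have hGooz : Goo z = 0 := by
    have h1 : Filter.Tendsto (fun n => Gs n z) Filter.atTop (nhds (0:Y)) := by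
      have : (fun n => Gs n z) = fun _ => (0:Y) := funext (fun n => hGsz n)
      rw [this]
      exact tendsto_const_nhds
    exact tendsto_nhds_unique (hGoo z) h1
  -- limit distance
  have hAoo : Filter.Tendsto A Filter.atTop (nhds (dist roo soo)) := by
    have : Filter.Tendsto (fun n => dist (ps n) (qs n)) Filter.atTop
        (nhds (dist roo soo)) := hroo.dist hsoo
    have he : A = fun n => dist (ps n) (qs n) := funext (fun n => hAdef n)
    rw [he]
    exact this
  have hdistoo : d/2 ≤ dist roo soo :=
    ge_of_tendsto hAoo (Filter.Eventually.of_forall hAhalf)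
  have hrsoo : roo ≠ soo := by
    have : 0 < dist roo soo := by linarith
    exact dist_pos.1 this
  have hdrsoo : 0 < dist roo soo := by linarith
  -- defect tendsto
  have hDse0 : Filter.Tendsto Dse Filter.atTop (nhds 0) := by
    apply squeeze_zero (fun n => (hD0 n).le) hDle
    have h1 : Filter.Tendsto (fun n : ℕ => ((1:ℝ)/2)^n) Filter.atTop (nhds 0) :=
      tendsto_pow_atTop_nhds_zero_of_lt_one (by norm_num) (by norm_num)
    have := h1.const_mul E
    simpa using this
  have hpow_tendsto : Filter.Tendsto (fun n : ℕ => (2*B*(1/2:ℝ)^n)) Filter.atTop (nhds 0) := by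
    have h1 : Filter.Tendsto (fun n : ℕ => ((1:ℝ)/2)^n) Filter.atTop (nhds 0) :=
      tendsto_pow_atTop_nhds_zero_of_lt_one (by norm_num) (by norm_num)
    have := h1.const_mul (2*B)
    simpa using this
  -- attainment
  have hlower : dist roo soo ≤ ‖Goo roo - Goo soo‖ := by
    have hTle : ∀ n, (1 - Dse n) * A n - dist roo (ps n) - dist soo (qs n)
        - (2*B*(1/2)^n) * dist roo soo ≤ ‖Goo roo - Goo soo‖ := by
      intro n
      have h1 : ‖Gs n (ps n) - Gs n (qs n)‖ > (1 - Dse n) * A n := by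
        rw [hAdef]; exact (hInv n).2.2.2.2
      have h2 : ‖Gs n (ps n) - Gs n (qs n)‖ ≤ dist (ps n) roo + ‖Gs n roo - Gs n soo‖
          + dist soo (qs n) := by
        have t1 : Gs n (ps n) - Gs n (qs n) = (Gs n (ps n) - Gs n roo)
            + (Gs n roo - Gs n soo) + (Gs n soo - Gs n (qs n)) := by abel
        rw [t1]
        have n1 : ‖Gs n (ps n) - Gs n roo‖ ≤ dist (ps n) roo := by
          have := hGspt n (ps n) roo; linarith
        have n2 : ‖Gs n soo - Gs n (qs n)‖ ≤ dist soo (qs n) := by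
          have := hGspt n soo (qs n); linarith
        calc ‖_ + _ + _‖ ≤ ‖(Gs n (ps n) - Gs n roo) + (Gs n roo - Gs n soo)‖
              + ‖Gs n soo - Gs n (qs n)‖ := norm_add_le _ _
          _ ≤ ‖Gs n (ps n) - Gs n roo‖ + ‖Gs n roo - Gs n soo‖
              + ‖Gs n soo - Gs n (qs n)‖ := by
              linarith [norm_add_le (Gs n (ps n) - Gs n roo) (Gs n roo - Gs n soo)]
          _ ≤ dist (ps n) roo + ‖Gs n roo - Gs n soo‖ + dist soo (qs n) := by linarith
      have h3 : ‖Gs n roo - Gs n soo‖ ≤ ‖Goo roo - Goo soo‖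
          + (2*B*(1/2)^n) * dist roo soo := by
        have t1 : Gs n roo - Gs n soo = (Goo roo - Goo soo)
            - ((Goo roo - Gs n roo) - (Goo soo - Gs n soo)) := by abel
        rw [t1]
        have := hTail n roo soo
        calc ‖_ - _‖ ≤ ‖Goo roo - Goo soo‖ + ‖(Goo roo - Gs n roo) - (Goo soo - Gs n soo)‖ :=
              norm_sub_le _ _
          _ ≤ ‖Goo roo - Goo soo‖ + (2*B*(1/2)^n) * dist roo soo := by linarith
      have h4 : dist roo (ps n) = dist (ps n) roo := dist_comm _ _
      linarith
    have hTlim : Filter.Tendsto (fun n => (1 - Dse n) * A n - dist roo (ps n)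
        - dist soo (qs n) - (2*B*(1/2)^n) * dist roo soo) Filter.atTop
        (nhds ((1 - 0) * dist roo soo - dist roo roo - dist soo soo - 0 * dist roo soo)) := by
      apply Filter.Tendsto.sub
      apply Filter.Tendsto.sub
      apply Filter.Tendsto.sub
      · exact ((tendsto_const_nhds.sub hDse0).mul hAoo)
      · exact tendsto_const_nhds.dist hroo
      · exact tendsto_const_nhds.dist hsoo
      · exact hpow_tendsto.mul tendsto_const_nhds
    have hsimp : (1 - 0) * dist roo soo - dist roo roo - dist soo soo - 0 * dist roo soo
        = dist roo soo := by simp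
    rw [hsimp] at hTlim
    exact le_of_tendsto hTlim (Filter.Eventually.of_forall hTle)
  have hupper : ‖Goo roo - Goo soo‖ ≤ dist roo soo := by
    have := hGoopt roo soo; linarith
  have hatt : ‖Goo roo - Goo soo‖ = dist roo soo := le_antisymm hupper hlower
  have hlip1 : lipNorm Goo = 1 := by
    apply le_antisymm (lipNorm_le zero_le_one hGoopt)
    have h1 := div_le_lipNorm hGoopt hrsoo
    rw [hatt, div_self hdrsoo.ne'] at h1
    exact h1
  -- compactness of the limit
  have hGoocompact : IsLipCompact Goo := by
    apply TotallyBounded.isCompact_of_isClosed _ isClosed_closure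
    apply TotallyBounded.closure
    rw [totallyBounded_iff]
    intro θ hθ
    obtain ⟨n, hn⟩ := exists_pow_lt_of_lt_one (show (0:ℝ) < θ/(8*B) by positivity)
      (show (1:ℝ)/2 < 1 by norm_num)
    have hn' : 2*B*(1/2:ℝ)^n < θ/2 := by
      rw [lt_div_iff₀ (by positivity : (0:ℝ) < 8*B)] at hn
      linarith only [hn, hθ]
    have hKn : IsCompact (closure {w : Y | ∃ x y : M, x ≠ y ∧
        w = (dist x y)⁻¹ • (Gs n x - Gs n y)}) := (hInv n).2.1
    have hKtb := hKn.totallyBounded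
    rw [totallyBounded_iff] at hKtb
    obtain ⟨tset, htfin, htcover⟩ := hKtb (θ/2) (by positivity)
    refine ⟨tset, htfin, ?_⟩
    rintro w ⟨x, y, hxy, rfl⟩
    have hdxy : 0 < dist x y := dist_pos.2 hxy
    have humem : (dist x y)⁻¹ • (Gs n x - Gs n y) ∈ closure {w : Y | ∃ x y : M, x ≠ y ∧
        w = (dist x y)⁻¹ • (Gs n x - Gs n y)} := subset_closure ⟨x, y, hxy, rfl⟩
    have := htcover humem
    rw [Set.mem_iUnion₂] at this
    obtain ⟨c, hc, hcball⟩ := this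
    rw [Set.mem_iUnion₂]
    refine ⟨c, hc, ?_⟩
    rw [Metric.mem_ball]
    have hwu : dist ((dist x y)⁻¹ • (Goo x - Goo y)) ((dist x y)⁻¹ • (Gs n x - Gs n y))
        < θ/2 := by
      rw [dist_eq_norm, ← smul_sub, norm_smul, Real.norm_eq_abs,
        abs_of_pos (inv_pos.2 hdxy)]
      have h1 : (Goo x - Goo y) - (Gs n x - Gs n y)
          = (Goo x - Gs n x) - (Goo y - Gs n y) := by abel
      rw [h1]
      have h2 := hTail n x y
      calc (dist x y)⁻¹ * ‖(Goo x - Gs n x) - (Goo y - Gs n y)‖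
          ≤ (dist x y)⁻¹ * ((2*B*(1/2)^n) * dist x y) := by
            apply mul_le_mul_of_nonneg_left h2 (inv_pos.2 hdxy).le
        _ = 2*B*(1/2)^n := by field_simp
        _ < θ/2 := hn'
    have hub : dist ((dist x y)⁻¹ • (Gs n x - Gs n y)) c < θ/2 := by
      rw [Metric.mem_ball] at hcball
      exact hcball
    calc dist ((dist x y)⁻¹ • (Goo x - Goo y)) c
        ≤ dist ((dist x y)⁻¹ • (Goo x - Goo y)) ((dist x y)⁻¹ • (Gs n x - Gs n y))
          + dist ((dist x y)⁻¹ • (Gs n x - Gs n y)) c := dist_triangle _ _ _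
      _ < θ := by linarith
  -- closeness to F
  have hGooclose : lipNorm (fun x => Goo x - F x) < ε := by
    have h1 : PtLip (fun x => Goo x - F x) (2*B) := by
      intro x y
      have := hTail 0 x y
      rw [hGs0, pow_zero, mul_one] at this
      exact this
    have h2 : lipNorm (fun x => Goo x - F x) ≤ 2*B := lipNorm_le (by positivity) h1
    have h3 : 2*B < ε := by rw [hBdef]; linarith only [hm0, hmε]
    linarith
  -- drift
  have hdriftoo : (dist p roo + dist q soo) / dist p q < ε := by
    have h1 : dist p roo ≤ 4*d*E := by
      have hT : Filter.Tendsto (fun n => dist p (ps n)) Filter.atTop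
          (nhds (dist p roo)) := tendsto_const_nhds.dist hroo
      apply le_of_tendsto hT
      apply Filter.Eventually.of_forall
      intro n
      have hdr := (hpdrift n).1
      have hz : 0 ≤ 4*d*E*(1/2)^n := mul_nonneg (by positivity) (hpow0 n).le
      linarith only [hdr, hz]
    have h2 : dist q soo ≤ 4*d*E := by
      have hT : Filter.Tendsto (fun n => dist q (qs n)) Filter.atTop
          (nhds (dist q soo)) := tendsto_const_nhds.dist hsoo
      apply le_of_tendsto hT
      apply Filter.Eventually.of_forall
      intro n
      have hdr := (hpdrift n).2
      have hz : 0 ≤ 4*d*E*(1/2)^n := mul_nonneg (by positivity) (hpow0 n).le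
      linarith only [hdr, hz]
    rw [div_lt_iff₀ (by rw [hddef] at hd0; exact hd0)]
    have h3 : 8*d*E < ε * d := by
      rw [hEE]
      have hx1 : 0 ≤ d*m*ρ := mul_nonneg (mul_nonneg hd0.le hm0.le) hρ0
      have hx2 : m/8 < ε := by linarith only [hm0, hmε]
      nlinarith only [hd0, hx1, hx2]
    rw [← hddef]
    linarith
  -- conclusion
  have hGoolip0 : IsLip0 z Goo := by
    refine ⟨⟨1, ?_⟩, hGooz⟩
    have := lipschitz_of_ptLip hGoopt
    simpa using this
  exact ⟨Goo, hGoolip0, hGoocompact, roo, soo, hrsoo, hatt, hlip1, hGooclose, hdriftoo⟩
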